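/- arXiv:1909.02718 — 4 statements merged into one kernel-verified Lean document; each statement's English description precedes it below -/
import Mathlib

section
/- Let G be a connected graph that does not belong to the family G^cs (i.e., there exists a weight function w with s(G,w) < cs(G,w)). If S is a minimum weighted safe set of (G,w) for some weight function w with s(G,w) < cs(G,w), then the bipartite 'component graph' β(G,S) — whose vertices are the components of G[S] and of G−S, with two components adjacent exactly when some edge of G joins them — also does not belong to G^cs. -/
open SimpleGraph
open scoped Classical

variable {V : Type*} [Fintype V]

noncomputable def setWeight (w : V → ℝ) (A : Set V) : ℝ :=
  ∑ v : V, if v ∈ A then w v else 0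

def IsComponentOf (G : SimpleGraph V) (S C : Set V) : Prop :=
  ∃ c : (G.induce S).ConnectedComponent,
    C = Subtype.val '' {x : ↥S | (G.induce S).connectedComponentMk x = c}

def Touches (G : SimpleGraph V) (C D : Set V) : Prop :=
  ∃ a ∈ C, ∃ b ∈ D, G.Adj a b

def IsSafeSet (G : SimpleGraph V) (w : V → ℝ) (S : Set V) : Prop :=
  S.Nonempty ∧ S ≠ Set.univ ∧
    ∀ C D : Set V, IsComponentOf G S C → IsComponentOf G Sᶜ D → Touches G C D →
      setWeight w D ≤ setWeight w C

def IsConnSafeSet (G : SimpleGraph V) (w : V → ℝ) (S : Set V) : Prop :=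
  IsSafeSet G w S ∧ (G.induce S).Connected

noncomputable def safeNumber (G : SimpleGraph V) (w : V → ℝ) : ℝ :=
  sInf (setWeight w '' {S | IsSafeSet G w S})

noncomputable def connSafeNumber (G : SimpleGraph V) (w : V → ℝ) : ℝ :=
  sInf (setWeight w '' {S | IsConnSafeSet G w S})

def InGcs (G : SimpleGraph V) : Prop :=
  ∀ w : V → ℝ, (∀ v, 0 < w v) → safeNumber G w = connSafeNumber G w

def betaVerts (G : SimpleGraph V) (S : Set V) : Set (Set V) :=
  {C | IsComponentOf G S C ∨ IsComponentOf G Sᶜ C}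

def betaGraph (G : SimpleGraph V) (S : Set V) : SimpleGraph ↥(betaVerts G S) where
  Adj C D := C ≠ D ∧ Touches G C.1 D.1
  symm := by
    constructor
    rintro C D ⟨hne, a, ha, b, hb, hab⟩
    exact ⟨hne.symm, b, hb, a, ha, hab.symm⟩
  loopless := by constructor; rintro C ⟨hne, _⟩; exact hne rfl

section Aux

variable {X : Type*}

/-- Reachability within a set, via a walk whose support stays in the set. -/
def RIn (H : SimpleGraph X) (A : Set X) (u v : X) : Prop :=
  ∃ p : H.Walk u v, ∀ x ∈ p.support, x ∈ A

namespace RIn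
variable {H : SimpleGraph X} {A : Set X} {u v x : X}

lemma refl (hu : u ∈ A) : RIn H A u u := ⟨Walk.nil, by simp [hu]⟩

lemma symm (h : RIn H A u v) : RIn H A v u := by
  obtain ⟨p, hp⟩ := h
  exact ⟨p.reverse, by simpa using hp⟩

lemma trans (h : RIn H A u v) (h' : RIn H A v x) : RIn H A u x := by
  obtain ⟨p, hp⟩ := h; obtain ⟨q, hq⟩ := h'
  refine ⟨p.append q, fun y hy => ?_⟩
  rw [Walk.support_append] at hy
  rcases List.mem_append.1 hy with hy | hy
  · exact hp _ hy
  · exact hq _ (List.mem_of_mem_tail hy)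

lemma mem_left (h : RIn H A u v) : u ∈ A := by
  obtain ⟨p, hp⟩ := h; exact hp _ p.start_mem_support

lemma mem_right (h : RIn H A u v) : v ∈ A := by
  obtain ⟨p, hp⟩ := h; exact hp _ p.end_mem_support

lemma of_adj (hu : u ∈ A) (hv : v ∈ A) (h : H.Adj u v) : RIn H A u v := by
  refine ⟨Walk.cons h Walk.nil, ?_⟩
  intro y hy
  simp only [Walk.support_cons, Walk.support_nil, List.mem_cons, List.mem_singleton] at hy
  rcases hy with rfl | hy
  · exact hu
  · simp at hy; subst hy; exact hv

lemma mono {B : Set X} (hAB : A ⊆ B) (h : RIn H A u v) : RIn H B u v := by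
  obtain ⟨p, hp⟩ := h; exact ⟨p, fun x hx => hAB (hp x hx)⟩

end RIn

private lemma aux_fwd {H : SimpleGraph X} {A : Set X} :
    ∀ {u v : X} (p : H.Walk u v), (∀ x ∈ p.support, x ∈ A) → ∀ (hu : u ∈ A) (hv : v ∈ A),
      (H.induce A).Reachable ⟨u, hu⟩ ⟨v, hv⟩ := by
  intro u v p
  induction p with
  | nil => intro _ hu hv; rfl
  | @cons a b c h q ih =>
    intro hp hu hv
    have hb : b ∈ A := hp b (by simp)
    have h1 : (H.induce A).Adj ⟨a, hu⟩ ⟨b, hb⟩ := by simpa using h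
    exact h1.reachable.trans (ih (fun x hx => hp x (by simp [hx])) hb hv)

private lemma aux_bwd {H : SimpleGraph X} {A : Set X} :
    ∀ (a b : ↥A) (p : (H.induce A).Walk a b), RIn H A a.1 b.1 := by
  intro a b p
  induction p with
  | nil => exact RIn.refl (Subtype.mem _)
  | @cons a b c h q ih =>
    have hab : H.Adj a.1 b.1 := by simpa using h
    exact (RIn.of_adj a.2 b.2 hab).trans ih

lemma rin_iff_reachable {H : SimpleGraph X} {A : Set X} {u v : X} (hu : u ∈ A) (hv : v ∈ A) :
    RIn H A u v ↔ (H.induce A).Reachable ⟨u, hu⟩ ⟨v, hv⟩ := by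
  constructor
  · rintro ⟨p, hp⟩; exact aux_fwd p hp hu hv
  · rintro ⟨p⟩; exact aux_bwd _ _ p

/-- The reachability class within `A` of the vertex `v`. -/
def comp (H : SimpleGraph X) (A : Set X) (v : X) : Set X := {u | RIn H A v u}

variable {H : SimpleGraph X} {A : Set X} {u v b : X}

lemma mem_comp_self (hv : v ∈ A) : v ∈ comp H A v := RIn.refl hv

lemma comp_subset : comp H A v ⊆ A := fun _ hu => hu.mem_right

lemma comp_eq_of_mem (hu : u ∈ comp H A v) : comp H A u = comp H A v :=
  Set.ext fun _ => ⟨fun hx => hu.trans hx, fun hx => (RIn.symm hu).trans hx⟩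

lemma adj_mem_comp (hu : u ∈ comp H A v) (hb : b ∈ A) (hadj : H.Adj u b) : b ∈ comp H A v :=
  hu.trans (RIn.of_adj hu.mem_right hb hadj)

lemma isComponentOf_iff {C : Set X} :
    IsComponentOf H A C ↔ ∃ v ∈ A, C = comp H A v := by
  constructor
  · rintro ⟨c, rfl⟩
    obtain ⟨x, hx⟩ := c.exists_rep
    refine ⟨x.1, x.2, ?_⟩
    ext u
    simp only [Set.mem_image, Set.mem_setOf_eq]
    constructor
    · rintro ⟨y, hy, rfl⟩
      have hr : (H.induce A).Reachable x y := ConnectedComponent.exact (hx.trans hy.symm)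
      exact (rin_iff_reachable x.2 y.2).2 (by simpa using hr)
    · intro hu
      have huA : u ∈ A := hu.mem_right
      refine ⟨⟨u, huA⟩, ?_, rfl⟩
      have hr := (rin_iff_reachable x.2 huA).1 hu
      calc (H.induce A).connectedComponentMk ⟨u, huA⟩
          = (H.induce A).connectedComponentMk ⟨x.1, x.2⟩ := ConnectedComponent.sound hr.symm
        _ = c := hx
  · rintro ⟨v, hv, rfl⟩
    refine ⟨(H.induce A).connectedComponentMk ⟨v, hv⟩, ?_⟩
    ext u
    simp only [Set.mem_image, Set.mem_setOf_eq]
    constructor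
    · intro hu
      have huA : u ∈ A := hu.mem_right
      refine ⟨⟨u, huA⟩, ?_, rfl⟩
      exact (ConnectedComponent.sound ((rin_iff_reachable hv huA).1 hu)).symm
    · rintro ⟨y, hy, rfl⟩
      exact (rin_iff_reachable hv y.2).2 (ConnectedComponent.exact hy.symm)

lemma IsComponentOf.nonempty {C : Set X} (h : IsComponentOf H A C) : C.Nonempty := by
  obtain ⟨v, hv, rfl⟩ := isComponentOf_iff.1 h
  exact ⟨v, mem_comp_self hv⟩

lemma IsComponentOf.subset' {C : Set X} (h : IsComponentOf H A C) : C ⊆ A := by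
  obtain ⟨v, hv, rfl⟩ := isComponentOf_iff.1 h
  exact comp_subset

private lemma aux_comp {H : SimpleGraph X} {A : Set X} :
    ∀ {a b : X} (p : H.Walk a b), (∀ x ∈ p.support, x ∈ A) → ∀ x ∈ p.support, x ∈ comp H A a := by
  intro a b p
  induction p with
  | nil =>
    intro hp x hx
    simp only [Walk.support_nil, List.mem_singleton] at hx
    subst hx
    exact mem_comp_self (hp _ (by simp))
  | @cons a c d h q ih =>
    intro hp x hx
    have ha : a ∈ A := hp _ (by simp)
    have hc : c ∈ A := hp _ (by simp)
    have hcc : c ∈ comp H A a := adj_mem_comp (mem_comp_self ha) hc h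
    rw [Walk.support_cons, List.mem_cons] at hx
    rcases hx with rfl | hx
    · exact mem_comp_self ha
    · have hx' := ih (fun y hy => hp y (by rw [Walk.support_cons]; exact List.mem_cons_of_mem _ hy)) x hx
      rwa [comp_eq_of_mem hcc] at hx'

/-- A walk inside `A` stays inside the reachability class of its start. -/
lemma rin_in_comp (hb : b ∈ comp H A v) : RIn H (comp H A v) v b := by
  obtain ⟨p, hp⟩ := hb
  exact ⟨p, fun x hx => aux_comp p hp x hx⟩

lemma comp_eq_singleton_of_no_adj (hA : ∀ x ∈ A, ∀ y ∈ A, ¬ H.Adj x y) {c : X} (hc : c ∈ A) :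
    comp H A c = {c} := by
  ext u
  simp only [Set.mem_singleton_iff]
  constructor
  · rintro ⟨p, hp⟩
    cases p with
    | nil => rfl
    | @cons a b c h q =>
      exact absurd h (hA _ (hp _ (by simp)) _ (hp _ (by simp)))
  · rintro rfl; exact mem_comp_self hc

end Aux


section CompMap

lemma setWeight_nonneg (w : V → ℝ) (hw : ∀ v, 0 < w v) (A : Set V) : 0 ≤ setWeight w A :=
  Finset.sum_nonneg fun v _ => by by_cases h : v ∈ A <;> simp [h, (hw v).le]

lemma setWeight_pos (w : V → ℝ) (hw : ∀ v, 0 < w v) {A : Set V} (hA : A.Nonempty) :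
    0 < setWeight w A := by
  obtain ⟨a, ha⟩ := hA
  refine Finset.sum_pos' (fun v _ => by by_cases h : v ∈ A <;> simp [h, (hw v).le]) ?_
  exact ⟨a, Finset.mem_univ a, by simp [ha, hw a]⟩

lemma setWeight_singleton (w : V → ℝ) (C : V) : setWeight w ({C} : Set V) = w C := by
  simp [setWeight, Set.mem_singleton_iff, Finset.sum_ite_eq']

variable (G : SimpleGraph V) (S : Set V)

/-- The element of the partition (components of `S` and of `Sᶜ`) containing `v`. -/
noncomputable def Vcomp (v : V) : Set V :=
  if v ∈ S then comp G S v else comp G Sᶜ v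

variable {G S}

lemma mem_Vcomp_self (v : V) : v ∈ Vcomp G S v := by
  unfold Vcomp; split_ifs with h
  · exact mem_comp_self h
  · exact mem_comp_self h

lemma Vcomp_mem_betaVerts (v : V) : Vcomp G S v ∈ betaVerts G S := by
  unfold Vcomp betaVerts; split_ifs with h
  · exact Or.inl (isComponentOf_iff.2 ⟨v, h, rfl⟩)
  · exact Or.inr (isComponentOf_iff.2 ⟨v, h, rfl⟩)

lemma Vcomp_eq_of_mem {u v : V} (hu : u ∈ Vcomp G S v) : Vcomp G S u = Vcomp G S v := by
  by_cases h : v ∈ S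
  · rw [Vcomp, if_pos h] at hu
    rw [Vcomp, Vcomp, if_pos h, if_pos (comp_subset hu)]
    exact comp_eq_of_mem hu
  · rw [Vcomp, if_neg h] at hu
    rw [Vcomp, Vcomp, if_neg h, if_neg (comp_subset hu : u ∈ Sᶜ)]
    exact comp_eq_of_mem hu

lemma betaVert_eq_Vcomp {C : Set V} (hC : C ∈ betaVerts G S) {v : V} (hv : v ∈ C) :
    C = Vcomp G S v := by
  rcases hC with h | h <;> obtain ⟨x, hx, rfl⟩ := isComponentOf_iff.1 h
  · have hvS : v ∈ S := comp_subset hv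
    rw [Vcomp, if_pos hvS]
    exact (comp_eq_of_mem hv).symm
  · have hvS : v ∈ Sᶜ := comp_subset hv
    rw [Vcomp, if_neg hvS]
    exact (comp_eq_of_mem hv).symm

variable (G S) in
/-- The partition element containing `v`, as a vertex of the beta graph. -/
noncomputable def pcmp (v : V) : ↥(betaVerts G S) := ⟨Vcomp G S v, Vcomp_mem_betaVerts v⟩

lemma mem_pcmp_self (v : V) : v ∈ (pcmp G S v).1 := mem_Vcomp_self v

lemma pcmp_eq_of_mem {u v : V} (hu : u ∈ (pcmp G S v).1) : pcmp G S u = pcmp G S v :=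
  Subtype.ext (Vcomp_eq_of_mem hu)

lemma eq_pcmp_of_mem {C : ↥(betaVerts G S)} {v : V} (hv : v ∈ C.1) : C = pcmp G S v :=
  Subtype.ext (betaVert_eq_Vcomp C.2 hv)

lemma betaVert_nonempty (C : ↥(betaVerts G S)) : C.1.Nonempty := by
  rcases C.2 with h | h
  · exact h.nonempty
  · exact h.nonempty

lemma setWeight_pcmp_preimage (w : V → ℝ) (𝒰 : Set ↥(betaVerts G S)) :
    setWeight (fun C : ↥(betaVerts G S) => setWeight w C.1) 𝒰
      = setWeight w {v | pcmp G S v ∈ 𝒰} := by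
  unfold setWeight
  calc (∑ C : ↥(betaVerts G S), if C ∈ 𝒰 then (∑ v : V, if v ∈ C.1 then w v else 0) else 0)
      = ∑ C : ↥(betaVerts G S), ∑ v : V,
          (if C ∈ 𝒰 then (if v ∈ C.1 then w v else 0) else 0) := by
        refine Finset.sum_congr rfl fun C _ => ?_
        split_ifs with h
        · rfl
        · simp
    _ = ∑ v : V, ∑ C : ↥(betaVerts G S),
          (if C ∈ 𝒰 then (if v ∈ C.1 then w v else 0) else 0) := Finset.sum_comm
    _ = ∑ v : V, (if v ∈ {v | pcmp G S v ∈ 𝒰} then w v else 0) := by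
        refine Finset.sum_congr rfl fun v _ => ?_
        rw [Finset.sum_eq_single (pcmp G S v)]
        · simp only [Set.mem_setOf_eq, mem_pcmp_self v, if_true]
        · intro C _ hne
          split_ifs with h1 h2
          · exact absurd (eq_pcmp_of_mem h2) hne
          · rfl
          · rfl
        · intro h; exact absurd (Finset.mem_univ _) h

end CompMap


section Transfer

variable {G : SimpleGraph V} {S : Set V}

private lemma aux_rin_pcmp {𝒰 : Set ↥(betaVerts G S)} :
    ∀ {a b : V} (p : G.Walk a b), (∀ x ∈ p.support, x ∈ {v | pcmp G S v ∈ 𝒰}) →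
      RIn (betaGraph G S) 𝒰 (pcmp G S a) (pcmp G S b) := by
  intro a b p
  induction p with
  | nil => intro hp; exact RIn.refl (hp _ (by simp))
  | @cons a c d h q ih =>
    intro hp
    have ha : pcmp G S a ∈ 𝒰 := hp _ (by simp)
    have hc : pcmp G S c ∈ 𝒰 := hp _ (by simp)
    have step : RIn (betaGraph G S) 𝒰 (pcmp G S a) (pcmp G S c) := by
      by_cases he : pcmp G S a = pcmp G S c
      · rw [he]; exact RIn.refl hc
      · exact RIn.of_adj ha hc ⟨he, a, mem_pcmp_self a, c, mem_pcmp_self c, h⟩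
    exact step.trans (ih (fun x hx => hp x (by simp [hx])))

lemma rin_of_mem_pcmp {𝒰 : Set ↥(betaVerts G S)} {C : ↥(betaVerts G S)} (hC : C ∈ 𝒰)
    {a b : V} (ha : a ∈ C.1) (hb : b ∈ C.1) : RIn G {v | pcmp G S v ∈ 𝒰} a b := by
  have hCa : C = pcmp G S a := eq_pcmp_of_mem ha
  have hsub : C.1 ⊆ {v | pcmp G S v ∈ 𝒰} := by
    intro u hu
    rw [Set.mem_setOf_eq, ← eq_pcmp_of_mem hu]
    exact hC
  refine RIn.mono hsub ?_
  have hb' : b ∈ Vcomp G S a := by rw [hCa] at hb; exact hb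
  have hr : RIn G (Vcomp G S a) a b := by
    by_cases h : a ∈ S
    · rw [Vcomp, if_pos h] at hb' ⊢
      exact rin_in_comp hb'
    · rw [Vcomp, if_neg h] at hb' ⊢
      exact rin_in_comp hb'
  rw [hCa]
  exact hr

private lemma aux_beta_lift {𝒰 : Set ↥(betaVerts G S)} :
    ∀ {C D : ↥(betaVerts G S)} (p : (betaGraph G S).Walk C D),
      (∀ Z ∈ p.support, Z ∈ 𝒰) → ∀ a ∈ C.1, ∀ b ∈ D.1, RIn G {v | pcmp G S v ∈ 𝒰} a b := by
  intro C D p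
  induction p with
  | nil => intro hp a ha b hb; exact rin_of_mem_pcmp (hp _ (by simp)) ha hb
  | @cons C C' D h q ih =>
    intro hp a ha b hb
    obtain ⟨hne, x, hx, y, hy, hxy⟩ := h
    have hC : C ∈ 𝒰 := hp _ (by simp)
    have hC' : C' ∈ 𝒰 := hp _ (List.mem_cons_of_mem _ q.start_mem_support)
    have h1 := rin_of_mem_pcmp hC ha hx
    have h2 := rin_of_mem_pcmp hC' hy hy
    exact (h1.trans (RIn.of_adj h1.mem_right h2.mem_left hxy)).trans
      (ih (fun Z hZ => hp Z (List.mem_cons_of_mem _ hZ)) y hy b hb)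

lemma beta_rin_lift {𝒰 : Set ↥(betaVerts G S)} {C D : ↥(betaVerts G S)}
    (h : RIn (betaGraph G S) 𝒰 C D) {a b : V} (ha : a ∈ C.1) (hb : b ∈ D.1) :
    RIn G {v | pcmp G S v ∈ 𝒰} a b := by
  obtain ⟨p, hp⟩ := h
  exact aux_beta_lift p hp a ha b hb

lemma comp_preimage_eq {𝒰 : Set ↥(betaVerts G S)} {v : V} :
    comp G {x | pcmp G S x ∈ 𝒰} v
      = {u | pcmp G S u ∈ comp (betaGraph G S) 𝒰 (pcmp G S v)} := by
  ext u
  constructor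
  · intro hu
    obtain ⟨p, hp⟩ := hu
    exact aux_rin_pcmp p hp
  · intro hu
    exact beta_rin_lift hu (mem_pcmp_self v) (mem_pcmp_self u)

/-- Transfer of connected safe sets from the beta graph back to `G`. -/
lemma transfer (w : V → ℝ) {𝒯 : Set ↥(betaVerts G S)}
    (h𝒯 : IsConnSafeSet (betaGraph G S) (fun C : ↥(betaVerts G S) => setWeight w C.1) 𝒯) :
    IsConnSafeSet G w {v | pcmp G S v ∈ 𝒯} := by
  set w' : ↥(betaVerts G S) → ℝ := fun C : ↥(betaVerts G S) => setWeight w C.1 with hw'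
  set T : Set V := {v | pcmp G S v ∈ 𝒯} with hT
  have hTc : Tᶜ = {v | pcmp G S v ∈ 𝒯ᶜ} := by ext x; simp [hT]
  constructor
  · refine ⟨?_, ?_, ?_⟩
    · obtain ⟨C, hC⟩ := h𝒯.1.1
      obtain ⟨v, hv⟩ := betaVert_nonempty C
      exact ⟨v, by rw [hT, Set.mem_setOf_eq, ← eq_pcmp_of_mem hv]; exact hC⟩
    · obtain ⟨C, hC⟩ := (Set.ne_univ_iff_exists_notMem _).1 h𝒯.1.2.1
      obtain ⟨v, hv⟩ := betaVert_nonempty C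
      refine (Set.ne_univ_iff_exists_notMem _).2 ⟨v, ?_⟩
      rw [hT, Set.mem_setOf_eq, ← eq_pcmp_of_mem hv]
      exact hC
    · intro C D hC hD hTouch
      rw [hTc] at hD
      obtain ⟨v, hvT, rfl⟩ := isComponentOf_iff.1 hC
      obtain ⟨u, huT, rfl⟩ := isComponentOf_iff.1 hD
      have hv𝒯 : pcmp G S v ∈ 𝒯 := hvT
      have hu𝒯 : pcmp G S u ∈ 𝒯ᶜ := huT
      have hCw : setWeight w (comp G T v)
          = setWeight w' (comp (betaGraph G S) 𝒯 (pcmp G S v)) := by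
        rw [hT, comp_preimage_eq]
        exact (setWeight_pcmp_preimage w _).symm
      have hDw : setWeight w (comp G {x | pcmp G S x ∈ 𝒯ᶜ} u)
          = setWeight w' (comp (betaGraph G S) 𝒯ᶜ (pcmp G S u)) := by
        rw [comp_preimage_eq]
        exact (setWeight_pcmp_preimage w _).symm
      rw [hCw, hDw]
      obtain ⟨a, ha, b, hb, hab⟩ := hTouch
      have haβ : pcmp G S a ∈ comp (betaGraph G S) 𝒯 (pcmp G S v) := by
        have := ha
        rw [hT, comp_preimage_eq] at this
        exact this
      have hbβ : pcmp G S b ∈ comp (betaGraph G S) 𝒯ᶜ (pcmp G S u) := by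
        have := hb
        rw [comp_preimage_eq] at this
        exact this
      have hne : pcmp G S a ≠ pcmp G S b := by
        intro he
        have h1 : pcmp G S a ∈ 𝒯 := comp_subset haβ
        have h2 : pcmp G S b ∈ 𝒯ᶜ := comp_subset hbβ
        rw [he] at h1
        exact h2 h1
      refine h𝒯.1.2.2 _ _ (isComponentOf_iff.2 ⟨pcmp G S v, hv𝒯, rfl⟩)
        (isComponentOf_iff.2 ⟨pcmp G S u, hu𝒯, rfl⟩) ?_
      exact ⟨pcmp G S a, haβ, pcmp G S b, hbβ, hne, a, mem_pcmp_self a, b, mem_pcmp_self b, hab⟩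
  · -- connectivity
    rw [connected_iff]
    have hTne : T.Nonempty := by
      obtain ⟨C, hC⟩ := h𝒯.1.1
      obtain ⟨v, hv⟩ := betaVert_nonempty C
      exact ⟨v, by rw [hT, Set.mem_setOf_eq, ← eq_pcmp_of_mem hv]; exact hC⟩
    obtain ⟨v0, hv0⟩ := hTne
    refine ⟨?_, ⟨⟨v0, hv0⟩⟩⟩
    intro x y
    have hx : pcmp G S x.1 ∈ 𝒯 := x.2
    have hy : pcmp G S y.1 ∈ 𝒯 := y.2
    have hreach := h𝒯.2.preconnected ⟨pcmp G S x.1, hx⟩ ⟨pcmp G S y.1, hy⟩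
    have hrin := (rin_iff_reachable hx hy).2 hreach
    have := beta_rin_lift hrin (mem_pcmp_self x.1) (mem_pcmp_self y.1)
    exact (rin_iff_reachable x.2 y.2).1 this

end Transfer

theorem stmt_1 (G : SimpleGraph V) (hG : G.Connected) (w : V → ℝ) (hw : ∀ v, 0 < w v)
    (hlt : safeNumber G w < connSafeNumber G w) (S : Set V)
    (hS : IsSafeSet G w S) (hmin : setWeight w S = safeNumber G w) :
    ¬ InGcs (betaGraph G S) := by
  intro hGcs
  set w' : ↥(betaVerts G S) → ℝ := fun C : ↥(betaVerts G S) => setWeight w C.1 with hw'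
  have hw'pos : ∀ C, 0 < w' C := fun C => setWeight_pos w hw (betaVert_nonempty C)
  set 𝒮 : Set ↥(betaVerts G S) := {C : ↥(betaVerts G S) | IsComponentOf G S C.1} with h𝒮
  have hTS : {v | pcmp G S v ∈ 𝒮} = S := by
    ext v
    simp only [Set.mem_setOf_eq, h𝒮]
    constructor
    · intro h
      exact h.subset' (mem_pcmp_self v)
    · intro hvS
      show IsComponentOf G S (Vcomp G S v)
      rw [Vcomp, if_pos hvS]
      exact isComponentOf_iff.2 ⟨v, hvS, rfl⟩
  have hnotin : ∀ v ∉ S, pcmp G S v ∉ 𝒮 := by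
    intro v hv h
    exact hv (h.subset' (mem_pcmp_self v))
  have not_both : ∀ C : ↥(betaVerts G S), C ∉ 𝒮 → IsComponentOf G Sᶜ C.1 := by
    intro C hC
    rcases C.2 with h | h
    · exact absurd h hC
    · exact h
  have noadjS : ∀ Z ∈ 𝒮, ∀ Y ∈ 𝒮, ¬ (betaGraph G S).Adj Z Y := by
    rintro Z hZ Y hY ⟨hne, a, ha, b, hb, hab⟩
    have haS : a ∈ S := hZ.subset' ha
    have hbS : b ∈ S := hY.subset' hb
    apply hne
    rw [eq_pcmp_of_mem ha, eq_pcmp_of_mem hb]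
    have hmem : b ∈ (pcmp G S a).1 := by
      show b ∈ Vcomp G S a
      rw [Vcomp, if_pos haS]
      exact adj_mem_comp (mem_comp_self haS) hbS hab
    exact (pcmp_eq_of_mem hmem).symm
  have noadjSc : ∀ Z ∈ 𝒮ᶜ, ∀ Y ∈ 𝒮ᶜ, ¬ (betaGraph G S).Adj Z Y := by
    rintro Z hZ Y hY ⟨hne, a, ha, b, hb, hab⟩
    have haS : a ∈ Sᶜ := (not_both Z hZ).subset' ha
    have hbS : b ∈ Sᶜ := (not_both Y hY).subset' hb
    apply hne
    rw [eq_pcmp_of_mem ha, eq_pcmp_of_mem hb]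
    have hmem : b ∈ (pcmp G S a).1 := by
      show b ∈ Vcomp G S a
      rw [Vcomp, if_neg haS]
      exact adj_mem_comp (mem_comp_self haS) hbS hab
    exact (pcmp_eq_of_mem hmem).symm
  have hsafe𝒮 : IsSafeSet (betaGraph G S) w' 𝒮 := by
    obtain ⟨s0, hs0⟩ := hS.1
    refine ⟨⟨pcmp G S s0, ?_⟩, ?_, ?_⟩
    · show IsComponentOf G S (Vcomp G S s0)
      rw [Vcomp, if_pos hs0]
      exact isComponentOf_iff.2 ⟨s0, hs0, rfl⟩
    · obtain ⟨t0, ht0⟩ := (Set.ne_univ_iff_exists_notMem S).1 hS.2.1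
      exact (Set.ne_univ_iff_exists_notMem _).2 ⟨pcmp G S t0, hnotin t0 ht0⟩
    · intro C D hC hD hTouch
      obtain ⟨c0, hc0, rfl⟩ := isComponentOf_iff.1 hC
      obtain ⟨d0, hd0, rfl⟩ := isComponentOf_iff.1 hD
      rw [comp_eq_singleton_of_no_adj noadjS hc0] at hTouch ⊢
      rw [comp_eq_singleton_of_no_adj noadjSc hd0] at hTouch ⊢
      obtain ⟨a, ha, b, hb, hab⟩ := hTouch
      simp only [Set.mem_singleton_iff] at ha hb
      subst ha; subst hb
      rw [setWeight_singleton, setWeight_singleton]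
      obtain ⟨hne, x, hx, y, hy, hxy⟩ := hab
      exact hS.2.2 a.1 b.1 hc0 (not_both b hd0) ⟨x, hx, y, hy, hxy⟩
  have h𝒮weight : setWeight w' 𝒮 = setWeight w S := by
    rw [hw', setWeight_pcmp_preimage w 𝒮, hTS]
  have hbdd : BddBelow (setWeight w' '' {A | IsSafeSet (betaGraph G S) w' A}) := by
    refine ⟨0, ?_⟩
    rintro x ⟨A, _, rfl⟩
    exact setWeight_nonneg w' hw'pos A
  have hle : safeNumber (betaGraph G S) w' ≤ setWeight w S :=
    h𝒮weight ▸ csInf_le hbdd ⟨𝒮, hsafe𝒮, rfl⟩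
  have heq := hGcs w' hw'pos
  by_cases hne : {𝒯 | IsConnSafeSet (betaGraph G S) w' 𝒯}.Nonempty
  · have hmem : connSafeNumber (betaGraph G S) w'
        ∈ setWeight w' '' {𝒯 | IsConnSafeSet (betaGraph G S) w' 𝒯} :=
      Set.Nonempty.csInf_mem (hne.image _) (Set.toFinite _)
    obtain ⟨𝒯, h𝒯, h𝒯w⟩ := hmem
    have hTconn : IsConnSafeSet G w {v | pcmp G S v ∈ 𝒯} := transfer w h𝒯
    have hTw : setWeight w {v | pcmp G S v ∈ 𝒯} = setWeight w' 𝒯 :=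
      (setWeight_pcmp_preimage w 𝒯).symm
    have hbdd2 : BddBelow (setWeight w '' {A | IsConnSafeSet G w A}) := by
      refine ⟨0, ?_⟩
      rintro x ⟨A, _, rfl⟩
      exact setWeight_nonneg w hw A
    have h1 : connSafeNumber G w ≤ setWeight w {v | pcmp G S v ∈ 𝒯} :=
      csInf_le hbdd2 ⟨_, hTconn, rfl⟩
    rw [hTw, h𝒯w, ← heq] at h1
    linarith
  · rw [Set.not_nonempty_iff_eq_empty] at hne
    have h0 : connSafeNumber (betaGraph G S) w' = 0 := by
      rw [connSafeNumber, hne, Set.image_empty, Real.sInf_empty]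
    have hmem : safeNumber (betaGraph G S) w'
        ∈ setWeight w' '' {A | IsSafeSet (betaGraph G S) w' A} :=
      Set.Nonempty.csInf_mem ⟨_, ⟨𝒮, hsafe𝒮, rfl⟩⟩ (Set.toFinite _)
    obtain ⟨A, hA, hAw⟩ := hmem
    have hpos : (0:ℝ) < setWeight w' A := setWeight_pos w' hw'pos hA.1
    rw [heq, h0] at hAw
    linarith
end

section
/- Let G be a connected graph and w a positive weight function such that s(G,w) < cs(G,w), and let S be a minimum weighted safe set of (G,w). Then G−S is disconnected. -/
open SimpleGraph
open scoped Classical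

variable {V : Type*} [Fintype V]

set_option linter.unusedSectionVars false

lemma setWeight_mono (w : V → ℝ) (hw : ∀ v, 0 < w v) {A B : Set V} (h : A ⊆ B) :
    setWeight w A ≤ setWeight w B := by
  apply Finset.sum_le_sum
  intro v _
  by_cases hv : v ∈ A
  · simp [hv, h hv]
  · simp only [hv, if_false]
    split <;> simp [(hw v).le]

lemma setWeight_union (w : V → ℝ) {A B : Set V} (h : Disjoint A B) :
    setWeight w (A ∪ B) = setWeight w A + setWeight w B := by
  rw [setWeight, setWeight, setWeight, ← Finset.sum_add_distrib]
  apply Finset.sum_congr rfl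
  intro v _
  by_cases hA : v ∈ A
  · have hB : v ∉ B := fun hB => Set.disjoint_left.mp h hA hB
    simp [hA, hB]
  · by_cases hB : v ∈ B <;> simp [hA, hB]

lemma setWeight_pair_le (w : V → ℝ) (hw : ∀ v, 0 < w v) {A B S : Set V}
    (hA : A ⊆ S) (hB : B ⊆ S) (h : Disjoint A B) :
    setWeight w A + setWeight w B ≤ setWeight w S := by
  rw [← setWeight_union w h]
  exact setWeight_mono w hw (Set.union_subset hA hB)

noncomputable def compSet (G : SimpleGraph V) (S : Set V)
    (c : (G.induce S).ConnectedComponent) : Set V :=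
  Subtype.val '' {x : ↥S | (G.induce S).connectedComponentMk x = c}

lemma isComponentOf_compSet (G : SimpleGraph V) (S : Set V)
    (c : (G.induce S).ConnectedComponent) : IsComponentOf G S (compSet G S c) := ⟨c, rfl⟩

lemma mem_compSet {G : SimpleGraph V} {S : Set V} {c : (G.induce S).ConnectedComponent} {v : V} :
    v ∈ compSet G S c ↔ ∃ h : v ∈ S, (G.induce S).connectedComponentMk ⟨v, h⟩ = c := by
  constructor
  · rintro ⟨⟨x, hx⟩, hmk, rfl⟩
    exact ⟨hx, hmk⟩
  · rintro ⟨h, hmk⟩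
    exact ⟨⟨v, h⟩, hmk, rfl⟩

lemma compSet_subset {G : SimpleGraph V} {S : Set V} {c : (G.induce S).ConnectedComponent} :
    compSet G S c ⊆ S := by
  rintro v ⟨x, _, rfl⟩; exact x.2

lemma compSet_nonempty {G : SimpleGraph V} {S : Set V} (c : (G.induce S).ConnectedComponent) :
    (compSet G S c).Nonempty := by
  obtain ⟨x, hx⟩ := c.exists_rep
  exact ⟨x.1, mem_compSet.mpr ⟨x.2, hx⟩⟩

lemma compSet_disjoint {G : SimpleGraph V} {S : Set V}
    {c c' : (G.induce S).ConnectedComponent} (h : c ≠ c') :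
    Disjoint (compSet G S c) (compSet G S c') := by
  rw [Set.disjoint_left]
  rintro v hv hv'
  obtain ⟨h1, hm1⟩ := mem_compSet.mp hv
  obtain ⟨h2, hm2⟩ := mem_compSet.mp hv'
  exact h (hm1 ▸ hm2 ▸ rfl)

lemma reach_in_compSet {G : SimpleGraph V} {S : Set V} {c : (G.induce S).ConnectedComponent}
    {x y : ↥S} (p : (G.induce S).Walk x y) (hx : (G.induce S).connectedComponentMk x = c) :
    ∀ (hx' : x.1 ∈ compSet G S c) (hy' : y.1 ∈ compSet G S c),
      (G.induce (compSet G S c)).Reachable ⟨x.1, hx'⟩ ⟨y.1, hy'⟩ := by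
  induction p with
  | nil => intro _ _; rfl
  | @cons u z y h q ih =>
    intro hx' hy'
    have hz : (G.induce S).connectedComponentMk z = c :=
      (SimpleGraph.ConnectedComponent.connectedComponentMk_eq_of_adj h).symm.trans hx
    have hz' : z.1 ∈ compSet G S c := mem_compSet.mpr ⟨z.2, by simpa using hz⟩
    refine (SimpleGraph.Adj.reachable ?_).trans (ih hz hz' hy')
    exact (h : G.Adj u.1 z.1)

lemma compSet_connected {G : SimpleGraph V} {S : Set V} (c : (G.induce S).ConnectedComponent) :
    (G.induce (compSet G S c)).Connected := by
  rw [SimpleGraph.connected_iff]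
  constructor
  · rintro ⟨a, ha⟩ ⟨b, hb⟩
    obtain ⟨haS, hamk⟩ := mem_compSet.mp ha
    obtain ⟨hbS, hbmk⟩ := mem_compSet.mp hb
    have hr : (G.induce S).Reachable ⟨a, haS⟩ ⟨b, hbS⟩ :=
      SimpleGraph.ConnectedComponent.eq.mp (hamk.trans hbmk.symm)
    obtain ⟨p⟩ := hr
    exact reach_in_compSet p hamk ha hb
  · obtain ⟨v, hv⟩ := compSet_nonempty c
    exact ⟨⟨v, hv⟩⟩

lemma crossing {G : SimpleGraph V} {A : Set V} {x y : V} (p : G.Walk x y)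
    (hx : x ∈ A) (hy : y ∉ A) :
    ∃ a, ∃ ha : a ∈ A, ∃ b, b ∉ A ∧ G.Adj a b ∧
      (G.induce A).Reachable ⟨x, hx⟩ ⟨a, ha⟩ := by
  induction p with
  | nil => exact absurd hx hy
  | @cons u z y h q ih =>
    by_cases hz : z ∈ A
    · obtain ⟨a, ha, b, hb, hab, hr⟩ := ih hz hy
      refine ⟨a, ha, b, hb, hab, ?_⟩
      exact (SimpleGraph.Adj.reachable (by exact h : (G.induce A).Adj ⟨u, hx⟩ ⟨z, hz⟩)).trans hr
    · exact ⟨u, hx, z, hz, h, by rfl⟩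

lemma component_eq_of_connected {G : SimpleGraph V} {A C : Set V}
    (h : (G.induce A).Connected) (hC : IsComponentOf G A C) : C = A := by
  obtain ⟨c, rfl⟩ := hC
  ext v
  constructor
  · rintro ⟨x, _, rfl⟩; exact x.2
  · intro hv
    obtain ⟨x, hx⟩ := c.exists_rep
    refine ⟨⟨v, hv⟩, ?_, rfl⟩
    show (G.induce A).connectedComponentMk ⟨v, hv⟩ = c
    rw [← hx]
    exact SimpleGraph.ConnectedComponent.eq.mpr (h.preconnected _ _)

lemma isComponentOf_self {G : SimpleGraph V} {A : Set V} (h : (G.induce A).Connected) :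
    IsComponentOf G A A := by
  obtain ⟨x⟩ := h.nonempty
  refine ⟨(G.induce A).connectedComponentMk x, ?_⟩
  exact (component_eq_of_connected h ⟨_, rfl⟩).symm

lemma connSafeNumber_le {G : SimpleGraph V} {w : V → ℝ} {T : Set V}
    (h : IsConnSafeSet G w T) : connSafeNumber G w ≤ setWeight w T := by
  apply csInf_le
  · exact (Set.toFinite {S | IsConnSafeSet G w S}).image _ |>.bddBelow
  · exact ⟨T, h, rfl⟩

theorem stmt_3 (G : SimpleGraph V) (hG : G.Connected) (w : V → ℝ) (hw : ∀ v, 0 < w v)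
    (hlt : safeNumber G w < connSafeNumber G w) (S : Set V)
    (hS : IsSafeSet G w S) (hmin : setWeight w S = safeNumber G w) :
    ¬ (G.induce Sᶜ).Connected := by
  intro hconn
  have hScne : Sᶜ.Nonempty := Set.nonempty_compl.mpr hS.2.1
  have hcompl : IsComponentOf G Sᶜ Sᶜ := isComponentOf_self hconn
  -- every component of S touches Sᶜ
  have key : ∀ c : (G.induce S).ConnectedComponent, Touches G (compSet G S c) Sᶜ := by
    intro c
    obtain ⟨x, hx⟩ := compSet_nonempty c
    obtain ⟨hxS, hxmk⟩ := mem_compSet.mp hx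
    obtain ⟨b0, hb0⟩ := hScne
    obtain ⟨p⟩ := hG.preconnected x b0
    obtain ⟨a, ha, b, hb, hab, hr⟩ := crossing p hxS hb0
    refine ⟨a, mem_compSet.mpr ⟨ha, ?_⟩, b, hb, hab⟩
    exact (SimpleGraph.ConnectedComponent.eq.mpr hr.symm).trans hxmk
  have wkey : ∀ c : (G.induce S).ConnectedComponent,
      setWeight w Sᶜ ≤ setWeight w (compSet G S c) :=
    fun c => hS.2.2 _ _ (isComponentOf_compSet G S c) hcompl (key c)
  by_cases hSc : (G.induce S).Connected
  · have h1 : connSafeNumber G w ≤ setWeight w S := connSafeNumber_le ⟨hS, hSc⟩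
    linarith [hmin ▸ h1]
  · -- S is disconnected; pick a maximum weight component C1
    haveI : Nonempty (G.induce S).ConnectedComponent := by
      obtain ⟨v, hv⟩ := hS.1
      exact ⟨(G.induce S).connectedComponentMk ⟨v, hv⟩⟩
    obtain ⟨c1, -, hmax⟩ := Finset.exists_max_image Finset.univ
      (fun c => setWeight w (compSet G S c)) ⟨Classical.arbitrary _, Finset.mem_univ _⟩
    have hmax : ∀ c, setWeight w (compSet G S c) ≤ setWeight w (compSet G S c1) :=
      fun c => hmax c (Finset.mem_univ c)
    -- a second component c2
    obtain ⟨c2, hc2⟩ : ∃ c2 : (G.induce S).ConnectedComponent, c2 ≠ c1 := by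
      by_contra h
      push_neg at h
      apply hSc
      rw [SimpleGraph.connected_iff]
      refine ⟨fun x y => ?_, ?_⟩
      · exact SimpleGraph.ConnectedComponent.eq.mp
          (((h ((G.induce S).connectedComponentMk x)).trans
            (h ((G.induce S).connectedComponentMk y)).symm))
      · obtain ⟨v, hv⟩ := hS.1
        exact ⟨⟨v, hv⟩⟩
    set C1 := compSet G S c1 with hC1def
    set C2 := compSet G S c2 with hC2def
    obtain ⟨a, haC1, b, hbSc, hab⟩ := key c1
    set T : Set V := Sᶜ ∪ C1 with hTdef
    have habT : ({a, b} : Set V) ⊆ T := by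
      rintro v (rfl | rfl)
      · exact Or.inr haC1
      · exact Or.inl hbSc
    have hTconn : (G.induce T).Connected := by
      have h1 : (G.induce (Sᶜ ∪ {a, b})).Connected :=
        SimpleGraph.induce_union_connected hconn.preconnected
          (SimpleGraph.induce_pair_connected_of_adj hab).preconnected ⟨b, hbSc, by simp⟩
      have h2 : (G.induce ((Sᶜ ∪ {a, b}) ∪ C1)).Connected :=
        SimpleGraph.induce_union_connected h1.preconnected (compSet_connected c1).preconnected
          ⟨a, Or.inr (by simp), haC1⟩
      have heq : (Sᶜ ∪ {a, b}) ∪ C1 = T := by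
        apply Set.Subset.antisymm
        · exact Set.union_subset (Set.union_subset Set.subset_union_left habT)
            Set.subset_union_right
        · exact Set.union_subset (Set.subset_union_left.trans Set.subset_union_left)
            Set.subset_union_right
      rwa [heq] at h2
    -- Tᶜ ⊆ S
    have hTc : Tᶜ ⊆ S := by
      intro v hv
      rw [Set.mem_compl_iff, hTdef, Set.mem_union] at hv
      push_neg at hv
      simpa using hv.1
    -- T ≠ univ
    have hTne : T ≠ Set.univ := by
      obtain ⟨v2, hv2⟩ := compSet_nonempty c2
      intro h
      have : v2 ∈ T := h ▸ Set.mem_univ v2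
      rcases this with h' | h'
      · exact h' (compSet_subset hv2)
      · exact Set.disjoint_left.mp (compSet_disjoint hc2) hv2 h'
    -- T is a connected safe set
    have hTsafe : IsConnSafeSet G w T := by
      refine ⟨⟨⟨b, Or.inl hbSc⟩, hTne, ?_⟩, hTconn⟩
      intro C D hC hD htouch
      have hCT : C = T := component_eq_of_connected hTconn hC
      obtain ⟨d, rfl⟩ := hD
      obtain ⟨d0, hd0⟩ := compSet_nonempty d
      obtain ⟨hd0T, hd0mk⟩ := mem_compSet.mp hd0
      -- the component D of Tᶜ lies inside a single component of S
      have hDsub : compSet G Tᶜ d ⊆ compSet G S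
          ((G.induce S).connectedComponentMk ⟨d0, hTc hd0T⟩) := by
        intro v hv
        obtain ⟨hvT, hvmk⟩ := mem_compSet.mp hv
        have hr : (G.induce Tᶜ).Reachable ⟨d0, hd0T⟩ ⟨v, hvT⟩ :=
          SimpleGraph.ConnectedComponent.eq.mp (hd0mk.trans hvmk.symm)
        have hr2 : (G.induce S).Reachable ⟨d0, hTc hd0T⟩ ⟨v, hTc hvT⟩ :=
          hr.map (G.induceHomOfLE hTc).toHom
        exact mem_compSet.mpr ⟨hTc hvT, (SimpleGraph.ConnectedComponent.eq.mpr hr2.symm)⟩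
      calc setWeight w (compSet G Tᶜ d)
          ≤ setWeight w (compSet G S ((G.induce S).connectedComponentMk ⟨d0, hTc hd0T⟩)) :=
            setWeight_mono w hw hDsub
        _ ≤ setWeight w C1 := hmax _
        _ ≤ setWeight w Sᶜ + setWeight w C1 := by
            linarith [setWeight_nonneg w hw Sᶜ]
        _ = setWeight w T := (setWeight_union w (by
            rw [Set.disjoint_left]
            intro v hv hv'
            exact hv (compSet_subset hv'))).symm
        _ = setWeight w C := by rw [hCT]
    have h1 : connSafeNumber G w ≤ setWeight w T := connSafeNumber_le hTsafe
    have h2 : setWeight w T = setWeight w Sᶜ + setWeight w C1 :=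
      setWeight_union w (by
        rw [Set.disjoint_left]
        intro v hv hv'
        exact hv (compSet_subset hv'))
    have h3 : setWeight w Sᶜ ≤ setWeight w C2 := wkey c2
    have h4 : setWeight w C1 + setWeight w C2 ≤ setWeight w S :=
      setWeight_pair_le w hw compSet_subset compSet_subset (compSet_disjoint (Ne.symm hc2))
    linarith [hmin ▸ (by linarith : connSafeNumber G w ≤ setWeight w S)]
end

section
/- The family G^cs of graphs defined using strictly positive weight functions coincides with the family G^cs_0 defined using nonnegative weight functions: a graph G satisfies s(G,w) = cs(G,w) for all positive weight functions w if and only if it satisfies s(G,w) = cs(G,w) for all nonnegative weight functions w. -/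
open SimpleGraph
open scoped Classical

variable {V : Type*} [Fintype V]

lemma sw_nonneg {w : V → ℝ} (hw : ∀ v, 0 ≤ w v) (A : Set V) : 0 ≤ setWeight w A :=
  Finset.sum_nonneg fun v _ => by by_cases h : v ∈ A <;> simp [h, hw v]

lemma sw_mono {w1 w2 : V → ℝ} {A : Set V} (h : ∀ v ∈ A, w1 v ≤ w2 v) :
    setWeight w1 A ≤ setWeight w2 A :=
  Finset.sum_le_sum fun v _ => by
    by_cases hv : v ∈ A
    · simpa [hv] using h v hv
    · simp [hv]

lemma sw_add_le {w1 w2 : V → ℝ} {ε : ℝ} (hε : 0 ≤ ε) (A : Set V)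
    (h : ∀ v ∈ A, w2 v ≤ w1 v + ε) :
    setWeight w2 A ≤ setWeight w1 A + ε * (Fintype.card V : ℝ) := by
  have h1 : setWeight w2 A ≤
      ∑ v : V, ((if v ∈ A then w1 v else 0) + (if v ∈ A then ε else 0)) := by
    apply Finset.sum_le_sum
    intro v _
    by_cases hv : v ∈ A
    · simpa [hv] using h v hv
    · simp [hv]
  rw [Finset.sum_add_distrib] at h1
  have h2 : ∑ v : V, (if v ∈ A then ε else 0) ≤ ε * (Fintype.card V : ℝ) := by
    have := Finset.sum_le_sum (s := Finset.univ)
      (f := fun v : V => if v ∈ A then ε else 0) (g := fun _ : V => ε)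
      (fun v _ => by by_cases hv : v ∈ A <;> simp [hv, hε])
    simpa [Finset.sum_const, Finset.card_univ, nsmul_eq_mul, mul_comm] using this
  calc setWeight w2 A ≤ setWeight w1 A + ∑ v : V, (if v ∈ A then ε else 0) := h1
    _ ≤ setWeight w1 A + ε * (Fintype.card V : ℝ) := by linarith

lemma sw_single_add {w1 w2 : V → ℝ} {ε : ℝ} {A : Set V} {c : V} (hc : c ∈ A)
    (h : ∀ v ∈ A, w1 v + ε ≤ w2 v) (hε : 0 ≤ ε) :
    setWeight w1 A + ε ≤ setWeight w2 A := by
  have key : ∀ v ∈ Finset.univ,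
      (if v ∈ A then w1 v else 0) + (if v = c then ε else 0) ≤ (if v ∈ A then w2 v else 0) := by
    intro v _
    by_cases hv : v ∈ A
    · by_cases hvc : v = c
      · subst hvc; simpa [hv] using h v hv
      · have := h v hv; simp [hv, hvc]; linarith
    · have hvc : v ≠ c := fun e => hv (e ▸ hc)
      simp [hv, hvc]
  have h2 := Finset.sum_le_sum key
  rw [Finset.sum_add_distrib] at h2
  have h3 : ∑ v : V, (if v = c then ε else 0) = ε := by
    simp [Finset.sum_ite_eq']
  rw [h3] at h2
  exact h2

lemma sw_pos {w : V → ℝ} (hw : ∀ v, 0 < w v) {A : Set V} (hA : A.Nonempty) :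
    0 < setWeight w A := by
  obtain ⟨c, hc⟩ := hA
  have h1 : w c ≤ setWeight w A := by
    have := Finset.single_le_sum (f := fun v : V => if v ∈ A then w v else 0)
      (fun v _ => by by_cases hv : v ∈ A <;> simp [hv, (hw v).le]) (Finset.mem_univ c)
    simpa [hc, setWeight] using this
  linarith [hw c]

lemma comp_subset_s4 {G : SimpleGraph V} {S C : Set V} (h : IsComponentOf G S C) : C ⊆ S := by
  obtain ⟨c, rfl⟩ := h
  rintro x ⟨y, -, rfl⟩
  exact y.2

theorem stmt_4 (G : SimpleGraph V) :
    InGcs G ↔ ∀ w : V → ℝ, (∀ v, 0 ≤ w v) → safeNumber G w = connSafeNumber G w := by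
  constructor
  · intro hG w hw
    by_cases hne : {S | IsSafeSet G w S}.Nonempty
    · -- main case
      have hfin : (setWeight w '' {S | IsSafeSet G w S}).Finite := (Set.toFinite _).image _
      obtain ⟨S₀, hS₀, hS₀w⟩ := (hne.image (setWeight w)).csInf_mem hfin
      obtain ⟨v₀, hv₀⟩ := hS₀.1
      have hcard : 0 < Fintype.card V := Fintype.card_pos_iff.mpr ⟨v₀⟩
      set NR : ℝ := (Fintype.card V : ℝ) with hNRdef
      have hNR : 1 ≤ NR := by rw [hNRdef]; exact_mod_cast hcard
      have hNR0 : 0 < NR := by linarith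
      -- per-n construction
      have key : ∀ n : ℕ, ∃ T : Set V,
          T.Nonempty ∧ T ≠ Set.univ ∧ (G.induce T).Connected ∧
          (∀ C D : Set V, IsComponentOf G T C → IsComponentOf G Tᶜ D → Touches G C D →
            setWeight w D ≤ setWeight w C + (1/((n:ℝ)+1)) * NR) ∧
          setWeight w T ≤ safeNumber G w + (1/((n:ℝ)+1)) * NR := by
        intro n
        set ε : ℝ := 1/((n:ℝ)+1) with hεdef
        have hε : 0 < ε := by positivity
        set wn : V → ℝ := fun v => w v + (if v ∈ S₀ then ε else ε / NR) with hwndef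
        have hεN : 0 < ε / NR := by positivity
        have hwn_pos : ∀ v, 0 < wn v := by
          intro v
          have := hw v
          by_cases h : v ∈ S₀ <;> simp only [hwndef, h, if_pos, if_neg, if_true, if_false] <;>
            linarith
        have hwn_ge : ∀ v, w v ≤ wn v := by
          intro v
          by_cases h : v ∈ S₀ <;> simp only [hwndef, h, if_true, if_false] <;> linarith
        have hεNle : ε / NR ≤ ε := div_le_self hε.le hNR
        have hwn_le : ∀ v, wn v ≤ w v + ε := by
          intro v
          by_cases h : v ∈ S₀ <;> simp only [hwndef, h, if_true, if_false] <;> linarith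
        -- S₀ is safe for wn
        have hS₀n : IsSafeSet G wn S₀ := by
          refine ⟨hS₀.1, hS₀.2.1, ?_⟩
          intro C D hC hD hTo
          obtain ⟨a, haC, -⟩ := id hTo
          have hCS := comp_subset_s4 hC
          have hDS := comp_subset_s4 hD
          have h1 : setWeight wn D ≤ setWeight w D + (ε/NR) * (Fintype.card V : ℝ) := by
            apply sw_add_le hεN.le
            intro v hv
            have hv' : v ∉ S₀ := hDS hv
            simp only [hwndef, hv', if_false]
            exact le_rfl
          have heq1 : (ε/NR) * (Fintype.card V : ℝ) = ε := by
            rw [← hNRdef]; field_simp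
          rw [heq1] at h1
          have h2 : setWeight w C + ε ≤ setWeight wn C := by
            apply sw_single_add haC ?_ hε.le
            intro v hv
            have hv' : v ∈ S₀ := hCS hv
            simp only [hwndef, hv', if_true]
            try linarith
            try exact le_rfl
          have h3 := hS₀.2.2 C D hC hD hTo
          linarith
        have heqn := hG wn hwn_pos
        have hfinn : (setWeight wn '' {S | IsSafeSet G wn S}).Finite := (Set.toFinite _).image _
        have hnen : (setWeight wn '' {S | IsSafeSet G wn S}).Nonempty := ⟨_, ⟨S₀, hS₀n, rfl⟩⟩
        obtain ⟨S₁, hS₁, hS₁w⟩ := hnen.csInf_mem hfinn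
        have hspos : 0 < safeNumber G wn := by
          rw [safeNumber, ← hS₁w]
          exact sw_pos hwn_pos hS₁.1
        have hcne : {S | IsConnSafeSet G wn S}.Nonempty := by
          by_contra hcon
          rw [Set.not_nonempty_iff_eq_empty] at hcon
          have h0 : connSafeNumber G wn = 0 := by
            rw [connSafeNumber, hcon, Set.image_empty, Real.sInf_empty]
          rw [heqn, h0] at hspos
          exact lt_irrefl _ hspos
        obtain ⟨T, hT, hTw⟩ := (hcne.image (setWeight wn)).csInf_mem ((Set.toFinite _).image _)
        have hTle : setWeight wn T ≤ setWeight wn S₀ := by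
          have hTw2 : setWeight wn T = safeNumber G wn := by
            rw [heqn, connSafeNumber]; exact hTw
          rw [hTw2, safeNumber]
          exact csInf_le hfinn.bddBelow ⟨S₀, hS₀n, rfl⟩
        have hS₀le : setWeight wn S₀ ≤ setWeight w S₀ + ε * NR := by
          have h := sw_add_le hε.le S₀ (fun v _ => hwn_le v)
          rw [← hNRdef] at h
          exact h
        refine ⟨T, hT.1.1, hT.1.2.1, hT.2, ?_, ?_⟩
        · intro C D hC hD hTo
          have h1 : setWeight w D ≤ setWeight wn D := sw_mono (fun v _ => hwn_ge v)
          have h2 := hT.1.2.2 C D hC hD hTo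
          have h3 : setWeight wn C ≤ setWeight w C + ε * NR := by
            have h := sw_add_le hε.le C (fun v _ => hwn_le v)
            rw [← hNRdef] at h
            exact h
          linarith
        · have h1 : setWeight w T ≤ setWeight wn T := sw_mono (fun v _ => hwn_ge v)
          have h2 : setWeight w S₀ = safeNumber G w := by rw [hS₀w, safeNumber]
          linarith
      choose f hf1 hf2 hf3 hf4 hf5 using key
      obtain ⟨T, hTinf'⟩ := Finite.exists_infinite_fiber f
      have hinf : (f ⁻¹' {T}).Infinite := Set.infinite_coe_iff.mp hTinf'
      obtain ⟨n₀, hn₀'⟩ := hinf.nonempty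
      have hfn₀ : f n₀ = T := hn₀'
      have small : ∀ δ : ℝ, 0 < δ → ∃ n : ℕ, f n = T ∧ (1/((n:ℝ)+1)) * NR ≤ δ := by
        intro δ hδ
        obtain ⟨n, hn, hlt⟩ := hinf.exists_gt (Nat.ceil (NR / δ))
        refine ⟨n, hn, ?_⟩
        have h1 : NR / δ ≤ (n:ℝ) := le_trans (Nat.le_ceil _) (by exact_mod_cast hlt.le)
        rw [div_le_iff₀ hδ] at h1
        have hn1 : (0:ℝ) < (n:ℝ) + 1 := by positivity
        rw [div_mul_eq_mul_div, one_mul, div_le_iff₀ hn1]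
        nlinarith
      have hTcs : IsConnSafeSet G w T := by
        refine ⟨⟨by rw [← hfn₀]; exact hf1 n₀, by rw [← hfn₀]; exact hf2 n₀, ?_⟩,
          by rw [← hfn₀]; exact hf3 n₀⟩
        intro C D hC hD hTo
        refine le_of_forall_pos_le_add ?_
        intro δ hδ
        obtain ⟨n, hfn, hle⟩ := small δ hδ
        have h := hf4 n C D (by rw [hfn]; exact hC) (by rw [hfn]; exact hD) hTo
        linarith
      have hwT : setWeight w T ≤ safeNumber G w := by
        refine le_of_forall_pos_le_add ?_
        intro δ hδ
        obtain ⟨n, hfn, hle⟩ := small δ hδ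
        have h := hf5 n
        rw [hfn] at h
        linarith
      have hcsle : connSafeNumber G w ≤ setWeight w T := by
        rw [connSafeNumber]
        exact csInf_le ((Set.toFinite _).image _).bddBelow ⟨T, hTcs, rfl⟩
      have hslecs : safeNumber G w ≤ connSafeNumber G w := by
        rw [safeNumber, connSafeNumber]
        exact csInf_le_csInf hfin.bddBelow ⟨_, ⟨T, hTcs, rfl⟩⟩
          (Set.image_mono (fun S hS => hS.1))
      linarith
    · -- empty safe family
      have hne' := Set.not_nonempty_iff_eq_empty.mp hne
      have h2 : {S | IsConnSafeSet G w S} = ∅ := by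
        rw [Set.eq_empty_iff_forall_notMem]
        intro S hS
        have : S ∈ {S | IsSafeSet G w S} := hS.1
        rw [hne'] at this
        exact this
      rw [safeNumber, connSafeNumber, hne', h2]
  · intro h w hw
    exact h w (fun v => (hw v).le)
end

section
/- Let G be a connected graph in G^cs with a cut vertex v. Then for each component D of G−v, the induced subgraph G[D ∪ {v}] also belongs to G^cs. -/
open SimpleGraph
open scoped Classical

variable {V : Type*} [Fintype V]

namespace SafeAux

section Reach
variable {W : Type*}

inductive ReachIn (G : SimpleGraph W) (S : Set W) : W → W → Prop
  | refl {x : W} (hx : x ∈ S) : ReachIn G S x x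
  | tail {x y z : W} (h : ReachIn G S x y) (hyz : G.Adj y z) (hz : z ∈ S) : ReachIn G S x z

namespace ReachIn

lemma mem_right {G : SimpleGraph W} {S : Set W} {x y : W} (h : ReachIn G S x y) : y ∈ S := by
  induction h with
  | refl hx => exact hx
  | tail _ _ hz _ => exact hz

lemma mem_left {G : SimpleGraph W} {S : Set W} {x y : W} (h : ReachIn G S x y) : x ∈ S := by
  induction h with
  | refl hx => exact hx
  | tail _ _ _ ih => exact ih

lemma trans {G : SimpleGraph W} {S : Set W} {x y z : W} (h1 : ReachIn G S x y)
    (h2 : ReachIn G S y z) : ReachIn G S x z := by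
  induction h2 with
  | refl _ => exact h1
  | tail _ hadj hz ih => exact .tail ih hadj hz

lemma mono {G : SimpleGraph W} {S S' : Set W} (hSS : S ⊆ S') {x y : W}
    (h : ReachIn G S x y) : ReachIn G S' x y := by
  induction h with
  | refl hx => exact .refl (hSS hx)
  | tail _ hadj hz ih => exact .tail ih hadj (hSS hz)

end ReachIn

lemma reachIn_of_reachable {G : SimpleGraph W} {S : Set W} {x y : ↥S}
    (h : (G.induce S).Reachable x y) : ReachIn G S x.val y.val := by
  obtain ⟨p⟩ := h
  induction p with
  | nil => exact ReachIn.refl (Subtype.prop _)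
  | cons hab p ih =>
      exact ReachIn.trans (ReachIn.tail (ReachIn.refl (Subtype.prop _)) hab (Subtype.prop _)) ih

lemma reachable_of_reachIn {G : SimpleGraph W} {S : Set W} {x y : W}
    (h : ReachIn G S x y) : ∀ (hx : x ∈ S) (hy : y ∈ S),
      (G.induce S).Reachable ⟨x, hx⟩ ⟨y, hy⟩ := by
  induction h with
  | refl hx => intro _ _; rfl
  | @tail y z h hadj hz ih =>
      intro hx _
      exact (ih hx h.mem_right).trans (SimpleGraph.Adj.reachable (by exact hadj))

lemma ReachIn.symm {G : SimpleGraph W} {S : Set W} {x y : W} (h : ReachIn G S x y) :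
    ReachIn G S y x := by
  have := (reachable_of_reachIn h h.mem_left h.mem_right).symm
  exact reachIn_of_reachable this

lemma reachIn_univ_of_reachable {G : SimpleGraph W} {x y : W} (h : G.Reachable x y) :
    ReachIn G Set.univ x y := by
  obtain ⟨p⟩ := h
  induction p with
  | nil => exact .refl trivial
  | cons hab p ih =>
      exact ReachIn.trans (ReachIn.tail (ReachIn.refl trivial) hab trivial) ih

/-- Characterization of components via `ReachIn`. -/
lemma isComponentOf_iff {G : SimpleGraph W} {S C : Set W} :
    IsComponentOf G S C ↔ ∃ x, x ∈ C ∧ C = {y | ReachIn G S x y} := by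
  constructor
  · rintro ⟨c, rfl⟩
    obtain ⟨x₀, rfl⟩ := c.exists_rep
    have hmk : ∀ z : ↥S, (G.induce S).connectedComponentMk z = Quot.mk _ z := fun _ => rfl
    simp only [← hmk]
    refine ⟨x₀.val, ⟨x₀, by rfl, rfl⟩, ?_⟩
    ext y
    simp only [Set.mem_image, Set.mem_setOf_eq]
    constructor
    · rintro ⟨y', hy', rfl⟩
      rw [SimpleGraph.ConnectedComponent.eq] at hy'
      exact (reachIn_of_reachable hy').symm
    · intro hy
      refine ⟨⟨y, hy.mem_right⟩, ?_, rfl⟩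
      rw [SimpleGraph.ConnectedComponent.eq]
      exact reachable_of_reachIn hy.symm hy.mem_right hy.mem_left
  · rintro ⟨x, hxC, rfl⟩
    have hxS : x ∈ S := (hxC : ReachIn G S x x).mem_left
    refine ⟨(G.induce S).connectedComponentMk ⟨x, hxS⟩, ?_⟩
    ext y
    simp only [Set.mem_setOf_eq, Set.mem_image]
    constructor
    · intro hy
      refine ⟨⟨y, hy.mem_right⟩, ?_, rfl⟩
      rw [SimpleGraph.ConnectedComponent.eq]
      exact reachable_of_reachIn hy.symm hy.mem_right hxS
    · rintro ⟨y', hy', rfl⟩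
      rw [SimpleGraph.ConnectedComponent.eq] at hy'
      exact (reachIn_of_reachable hy').symm

lemma _root_.IsComponentOf.subset {G : SimpleGraph W} {S C : Set W} (h : IsComponentOf G S C) :
    C ⊆ S := by
  obtain ⟨x, hxC, rfl⟩ := isComponentOf_iff.mp h
  exact fun y hy => ReachIn.mem_right hy

lemma _root_.IsComponentOf.nonempty_s5 {G : SimpleGraph W} {S C : Set W} (h : IsComponentOf G S C) :
    C.Nonempty := by
  obtain ⟨x, hxC, rfl⟩ := isComponentOf_iff.mp h
  exact ⟨x, hxC⟩

lemma _root_.IsComponentOf.reach {G : SimpleGraph W} {S C : Set W} (h : IsComponentOf G S C)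
    {y z : W} (hy : y ∈ C) (hz : z ∈ C) : ReachIn G S y z := by
  obtain ⟨x, hxC, rfl⟩ := isComponentOf_iff.mp h
  exact (ReachIn.symm hy).trans hz

lemma _root_.IsComponentOf.mem_of_reach {G : SimpleGraph W} {S C : Set W} (h : IsComponentOf G S C)
    {y z : W} (hy : y ∈ C) (hr : ReachIn G S y z) : z ∈ C := by
  obtain ⟨x, hxC, rfl⟩ := isComponentOf_iff.mp h
  exact ReachIn.trans hy hr

lemma _root_.IsComponentOf.closed {G : SimpleGraph W} {S C : Set W} (h : IsComponentOf G S C)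
    {y z : W} (hy : y ∈ C) (hz : z ∈ S) (hadj : G.Adj y z) : z ∈ C :=
  h.mem_of_reach hy (.tail (.refl (h.subset hy)) hadj hz)

lemma isComponentOf_of_mem {G : SimpleGraph W} {S : Set W} {u : W} (hu : u ∈ S) :
    IsComponentOf G S {y | ReachIn G S u y} :=
  isComponentOf_iff.mpr ⟨u, ReachIn.refl hu, rfl⟩

/-- Workhorse: a nonempty, internally connected, adjacency-closed subset of `S` is a component. -/
lemma isComponentOf_intro {G : SimpleGraph W} {S C : Set W} {x : W} (hxC : x ∈ C)
    (hCS : C ⊆ S) (hconn : ∀ y ∈ C, ReachIn G S x y)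
    (hclosed : ∀ y ∈ C, ∀ z ∈ S, G.Adj y z → z ∈ C) :
    IsComponentOf G S C := by
  refine isComponentOf_iff.mpr ⟨x, hxC, ?_⟩
  ext y
  simp only [Set.mem_setOf_eq]
  refine ⟨fun hy => hconn y hy, fun hy => ?_⟩
  clear hconn
  induction hy with
  | refl _ => exact hxC
  | tail h hadj hz ih => exact hclosed _ ih _ hz hadj

lemma reach_closed {G : SimpleGraph W} {S X : Set W}
    (hcl : ∀ x ∈ X, ∀ y ∈ S, G.Adj x y → y ∈ X) {a b : W}
    (h : ReachIn G S a b) : a ∈ X → b ∈ X := by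
  induction h with
  | refl _ => exact id
  | tail h hadj hz ih => exact fun ha => hcl _ (ih ha) _ hz hadj

/-- Path confinement lemma. -/
lemma confine {G : SimpleGraph W} {B U : Set W} {v : W}
    (hcl : ∀ x ∈ B, x ≠ v → ∀ y, G.Adj x y → y ∈ B)
    {a c : W} (h : ReachIn G U a c) : a ∈ B →
      (c ∈ B → ReachIn G (U ∩ B) a c) ∧ (c ∉ B → v ∈ U ∧ ReachIn G (U ∩ B) a v) := by
  induction h with
  | refl hx =>
      intro ha
      exact ⟨fun hc => .refl ⟨hx, ha⟩, fun hc => absurd ha hc⟩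
  | @tail y z h hadj hz ih =>
      intro ha
      by_cases hyB : y ∈ B <;> by_cases hzB : z ∈ B
      · exact ⟨fun _ => .tail ((ih ha).1 hyB) hadj ⟨hz, hzB⟩, fun hc => absurd hzB hc⟩
      · refine ⟨fun hc => absurd hc hzB, fun _ => ?_⟩
        have hyv : y = v := by
          by_contra hne
          exact hzB (hcl y hyB hne z hadj)
        refine ⟨hyv ▸ h.mem_right, hyv ▸ (ih ha).1 hyB⟩
      · have hzv : z = v := by
          by_contra hne
          exact hyB (hcl z hzB hne y hadj.symm)
        refine ⟨fun _ => ?_, fun hc => absurd hzB hc⟩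
        obtain ⟨hvU, hr⟩ := (ih ha).2 hyB
        exact hzv ▸ hr
      · exact ⟨fun hc => absurd hc hzB, fun _ => (ih ha).2 hyB⟩

lemma crossing {G : SimpleGraph W} {T X : Set W}
    (hX : ∀ q ∈ X, ∀ y, G.Adj q y → y ∉ T → y ∈ X)
    (hXT : ∀ x ∈ X, x ∉ T)
    {a c : W} (h : ReachIn G Set.univ a c) : a ∈ T → c ∈ X →
      ∃ p q, p ∈ T ∧ q ∈ X ∧ G.Adj p q := by
  induction h with
  | refl _ => exact fun ha hc => absurd ha (hXT _ hc)
  | @tail y z h hadj _ ih =>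
      intro ha hc
      by_cases hyT : y ∈ T
      · exact ⟨y, z, hyT, hc, hadj⟩
      · exact ih ha (hX z hc y hadj.symm hyT)

/-- Transfer of `ReachIn` through `induce`. -/
lemma reachIn_induce_of {G : SimpleGraph W} {A : Set W} {S' : Set ↥A} {x y : ↥A}
    (h : ReachIn (G.induce A) S' x y) : ReachIn G (Subtype.val '' S') x.val y.val := by
  induction h with
  | refl hx => exact .refl ⟨_, hx, rfl⟩
  | @tail y z h hadj hz ih => exact .tail ih hadj ⟨_, hz, rfl⟩

lemma reachIn_induce_back {G : SimpleGraph W} {A : Set W} {S' : Set ↥A} {a b : W}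
    (h : ReachIn G (Subtype.val '' S') a b) :
    ∃ (ha : a ∈ A) (hb : b ∈ A), ReachIn (G.induce A) S' ⟨a, ha⟩ ⟨b, hb⟩ := by
  induction h with
  | refl hx =>
      obtain ⟨x', hx', rfl⟩ := hx
      exact ⟨x'.2, x'.2, .refl hx'⟩
  | @tail y z h hadj hz ih =>
      obtain ⟨ha, hy, hr⟩ := ih
      obtain ⟨z', hz', rfl⟩ := hz
      exact ⟨ha, z'.2, .tail hr (by exact hadj) hz'⟩

lemma reachIn_induce_iff {G : SimpleGraph W} {A : Set W} {S' : Set ↥A} {x y : ↥A} :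
    ReachIn (G.induce A) S' x y ↔ ReachIn G (Subtype.val '' S') x.val y.val := by
  refine ⟨reachIn_induce_of, fun h => ?_⟩
  obtain ⟨ha, hb, hr⟩ := reachIn_induce_back h
  exact hr

lemma image_val_compl {A : Set W} (S' : Set ↥A) :
    Subtype.val '' (S'ᶜ) = A \ (Subtype.val '' S') := by
  ext y
  constructor
  · rintro ⟨y', hy', rfl⟩
    refine ⟨y'.2, fun ⟨z', hz', hzy⟩ => hy' ?_⟩
    have : z' = y' := Subtype.ext hzy
    exact this ▸ hz'
  · rintro ⟨hyA, hyn⟩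
    exact ⟨⟨y, hyA⟩, fun h => hyn ⟨⟨y, hyA⟩, h, rfl⟩, rfl⟩

lemma isComponentOf_induce_iff {G : SimpleGraph W} {A : Set W} {S' C' : Set ↥A} :
    IsComponentOf (G.induce A) S' C' ↔
      IsComponentOf G (Subtype.val '' S') (Subtype.val '' C') := by
  rw [isComponentOf_iff, isComponentOf_iff]
  constructor
  · rintro ⟨x', hx'C, rfl⟩
    refine ⟨x'.val, ⟨x', hx'C, rfl⟩, ?_⟩
    ext y
    simp only [Set.mem_image, Set.mem_setOf_eq]
    constructor
    · rintro ⟨y', hy', rfl⟩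
      exact reachIn_induce_of hy'
    · intro hy
      obtain ⟨ha, hb, hr⟩ := reachIn_induce_back hy
      exact ⟨⟨y, hb⟩, hr, rfl⟩
  · rintro ⟨x, hxC, hEq⟩
    obtain ⟨x', hx'C, rfl⟩ := hxC
    refine ⟨x', hx'C, ?_⟩
    ext y'
    have : y'.val ∈ Subtype.val '' C' ↔ y' ∈ C' :=
      (Subtype.val_injective.mem_set_image)
    rw [← this, hEq]
    simp only [Set.mem_setOf_eq]
    rw [reachIn_induce_iff]

lemma isComponentOf_image_val {G : SimpleGraph W} {A : Set W} {S' : Set ↥A} {C : Set W}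
    (h : IsComponentOf G (Subtype.val '' S') C) :
    ∃ C' : Set ↥A, C = Subtype.val '' C' ∧ IsComponentOf (G.induce A) S' C' := by
  have hCA : C ⊆ A := h.subset.trans (Subtype.coe_image_subset _ _)
  refine ⟨Subtype.val ⁻¹' C, ?_, ?_⟩
  · rw [Subtype.image_preimage_coe]
    exact (Set.inter_eq_right.mpr hCA).symm
  · rw [isComponentOf_induce_iff, Subtype.image_preimage_coe,
      Set.inter_eq_right.mpr hCA]
    exact h

end Reach

section Weights
variable {w : V → ℝ} {B B₁ B₂ : Set V}

lemma setWeight_nonneg (hw : ∀ u, 0 ≤ w u) (B : Set V) : 0 ≤ setWeight w B := by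
  refine Finset.sum_nonneg fun u _ => ?_
  by_cases h : u ∈ B <;> simp [h, hw u]

lemma setWeight_pos (hw : ∀ u, 0 < w u) (hB : B.Nonempty) : 0 < setWeight w B := by
  obtain ⟨b, hb⟩ := hB
  refine Finset.sum_pos' (fun u _ => ?_) ⟨b, Finset.mem_univ b, ?_⟩
  · by_cases h : u ∈ B <;> simp [h, (hw u).le]
  · simp [hb, hw b]

lemma setWeight_mono (hw : ∀ u, 0 ≤ w u) (h : B₁ ⊆ B₂) :
    setWeight w B₁ ≤ setWeight w B₂ := by
  refine Finset.sum_le_sum fun u _ => ?_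
  by_cases h1 : u ∈ B₁
  · simp [h1, h h1]
  · by_cases h2 : u ∈ B₂ <;> simp [h1, h2, hw u]

lemma setWeight_union (h : Disjoint B₁ B₂) :
    setWeight w (B₁ ∪ B₂) = setWeight w B₁ + setWeight w B₂ := by
  rw [setWeight, setWeight, setWeight, ← Finset.sum_add_distrib]
  refine Finset.sum_congr rfl fun u _ => ?_
  by_cases h1 : u ∈ B₁
  · have h2 : u ∉ B₂ := fun h2 => (Set.disjoint_left.mp h h1) h2
    simp [h1, h2]
  · by_cases h2 : u ∈ B₂ <;> simp [h1, h2]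

lemma setWeight_singleton (u : V) : setWeight w {u} = w u := by
  rw [setWeight]
  rw [Finset.sum_eq_single u] <;> simp_all

lemma setWeight_split (A B : Set V) :
    setWeight w B = setWeight w (B ∩ A) + setWeight w (B ∩ Aᶜ) := by
  rw [← setWeight_union]
  · congr 1
    ext u
    by_cases h : u ∈ A <;> simp [h]
  · exact Set.disjoint_of_subset (Set.inter_subset_right) (Set.inter_subset_right)
      disjoint_compl_right

lemma setWeight_subtype_sum {A : Set V} [Fintype ↥A] (B : Set V) (hBA : B ⊆ A) :
    setWeight w B = ∑ x : ↥A, if x.val ∈ B then w x.val else 0 := by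
  rw [setWeight]
  rw [← Finset.sum_subtype (Finset.univ.filter (· ∈ A))
    (fun x => by simp) (fun u => if u ∈ B then w u else 0)]
  rw [Finset.sum_filter_of_ne]
  intro u _ hne
  by_cases h : u ∈ B
  · exact hBA h
  · simp [h] at hne

lemma setWeight_image_val {A : Set V} [Fintype ↥A] (w' : ↥A → ℝ) (hww' : ∀ x : ↥A, w x.val = w' x)
    (B' : Set ↥A) : setWeight w (Subtype.val '' B') = setWeight w' B' := by
  rw [setWeight_subtype_sum (Subtype.val '' B') (Subtype.coe_image_subset A B'), setWeight]
  refine Finset.sum_congr rfl fun x _ => ?_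
  have : x.val ∈ Subtype.val '' B' ↔ x ∈ B' := Subtype.val_injective.mem_set_image
  by_cases h : x ∈ B' <;> simp [this, h, hww']

end Weights

/-- Gap lemma for finite sets of reals. -/
lemma exists_gap (Q : Set ℝ) (hQ : Q.Finite) :
    ∃ ε > 0, ∀ a ∈ Q, ∀ b ∈ Q, a ≤ b + ε → a ≤ b := by
  classical
  set P : Set ℝ := {p | ∃ a ∈ Q, ∃ b ∈ Q, a - b = p ∧ 0 < p} with hP
  have hPfin : P.Finite := by
    have : P ⊆ (fun q : ℝ × ℝ => q.1 - q.2) '' (Q ×ˢ Q) := by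
      rintro p ⟨a, ha, b, hb, rfl, -⟩
      exact ⟨(a, b), ⟨ha, hb⟩, rfl⟩
    exact Set.Finite.subset ((hQ.prod hQ).image _) this
  by_cases hPne : P.Nonempty
  · refine ⟨sInf P / 2, ?_, ?_⟩
    · have : sInf P ∈ P := hPne.csInf_mem hPfin
      obtain ⟨-, -, -, -, -, hpos⟩ := this
      linarith
    · intro a ha b hb hab
      by_contra hc
      push_neg at hc
      have hmem : a - b ∈ P := ⟨a, ha, b, hb, rfl, by linarith⟩
      have h1 : sInf P ≤ a - b := csInf_le hPfin.bddBelow hmem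
      have h2 : sInf P ∈ P := hPne.csInf_mem hPfin
      obtain ⟨-, -, -, -, -, hpos⟩ := h2
      linarith
  · refine ⟨1, one_pos, fun a ha b hb _ => ?_⟩
    by_contra hc
    push_neg at hc
    exact hPne ⟨a - b, a, ha, b, hb, rfl, by linarith⟩

section Context
variable {G : SimpleGraph V} {v : V} {D : Set V}

lemma no_DR_edge (hD : IsComponentOf G ({v}ᶜ : Set V) D) {x y : V} (hx : x ∈ D)
    (hadj : G.Adj x y) : y ∈ D ∪ {v} := by
  by_cases hy : y = v
  · exact Or.inr hy
  · exact Or.inl (hD.closed hx (by simpa using hy) hadj)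

lemma hclA (hD : IsComponentOf G ({v}ᶜ : Set V) D) :
    ∀ x ∈ D ∪ {v}, x ≠ v → ∀ y, G.Adj x y → y ∈ D ∪ {v} := by
  intro x hx hxv y hadj
  rcases hx with hx | hx
  · exact no_DR_edge hD hx hadj
  · exact absurd hx hxv

lemma hclB (hD : IsComponentOf G ({v}ᶜ : Set V) D) :
    ∀ x ∈ (D ∪ {v})ᶜ ∪ {v}, x ≠ v → ∀ y, G.Adj x y → y ∈ (D ∪ {v})ᶜ ∪ {v} := by
  intro x hx hxv y hadj
  have hxc : x ∈ (D ∪ {v})ᶜ := by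
    rcases hx with hx | hx
    · exact hx
    · exact absurd hx hxv
  by_cases hyD : y ∈ D
  · exact absurd (no_DR_edge hD hyD hadj.symm) hxc
  · by_cases hyv : y = v
    · exact Or.inr hyv
    · exact Or.inl (by
        intro hc
        rcases hc with hc | hc
        · exact hyD hc
        · exact hyv hc)

lemma reach_to_v (hG : G.Connected) (hD : IsComponentOf G ({v}ᶜ : Set V) D) {a : V}
    (ha : a ∈ D ∪ {v}) : ReachIn G (D ∪ {v}) a v := by
  have hr : ReachIn G Set.univ a v := reachIn_univ_of_reachable (hG.preconnected a v)
  have h := (confine (hclA hD) hr ha).1 (Or.inr rfl)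
  rwa [Set.univ_inter] at h

lemma reach_R_to_v (hG : G.Connected) (hD : IsComponentOf G ({v}ᶜ : Set V) D) {r : V}
    (hr : r ∈ (D ∪ {v})ᶜ) : ReachIn G ((D ∪ {v})ᶜ ∪ {v}) r v := by
  have hru : ReachIn G Set.univ r v := reachIn_univ_of_reachable (hG.preconnected r v)
  have h := (confine (hclB hD) hru (Or.inl hr)).1 (Or.inr rfl)
  rwa [Set.univ_inter] at h

end Context

section SW
variable {A : Set V} [Fintype ↥A] {w : V → ℝ} {w' : ↥A → ℝ} {p : ↥A} {ρ : ℝ}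

lemma mem_image_val_iff {B' : Set ↥A} {x : ↥A} :
    x.val ∈ Subtype.val '' B' ↔ x ∈ B' := Subtype.val_injective.mem_set_image

lemma sw_eq_of_agree {B' : Set ↥A} (h : ∀ x ∈ B', w x.val = w' x) :
    setWeight w (Subtype.val '' B') = setWeight w' B' := by
  rw [setWeight_subtype_sum (w := w) _ (Subtype.coe_image_subset A B'), setWeight]
  refine Finset.sum_congr rfl fun x _ => ?_
  by_cases hx : x ∈ B'
  · rw [if_pos (mem_image_val_iff.mpr hx), if_pos hx, h x hx]
  · rw [if_neg (fun c => hx (mem_image_val_iff.mp c)), if_neg hx]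

lemma sw_ub (h : ∀ x : ↥A, w x.val ≤ w' x) (hw' : ∀ x, 0 ≤ w' x) (B' : Set ↥A) :
    setWeight w (Subtype.val '' B') ≤ setWeight w' B' := by
  rw [setWeight_subtype_sum (w := w) _ (Subtype.coe_image_subset A B'), setWeight]
  refine Finset.sum_le_sum fun x _ => ?_
  by_cases hx : x ∈ B'
  · rw [if_pos (mem_image_val_iff.mpr hx), if_pos hx]; exact h x
  · rw [if_neg (fun c => hx (mem_image_val_iff.mp c)), if_neg hx]

lemma sw_lb (hρ : 0 ≤ ρ) (h : ∀ x : ↥A, x ≠ p → w x.val = w' x)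
    (hp : w' p - ρ ≤ w p.val) (B' : Set ↥A) :
    setWeight w' B' - ρ ≤ setWeight w (Subtype.val '' B') := by
  rw [setWeight_subtype_sum (w := w) _ (Subtype.coe_image_subset A B'), setWeight]
  have key : ∑ x : ↥A, ((if x ∈ B' then w' x else 0)
      - (if x.val ∈ Subtype.val '' B' then w x.val else 0))
      ≤ ∑ x : ↥A, (if x = p then ρ else 0) := by
    refine Finset.sum_le_sum fun x _ => ?_
    by_cases hxp : x = p
    · subst hxp
      rw [if_pos rfl]
      by_cases hx : x ∈ B'
      · rw [if_pos hx, if_pos (mem_image_val_iff.mpr hx)]; linarith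
      · rw [if_neg hx, if_neg (fun c => hx (mem_image_val_iff.mp c))]; linarith
    · rw [if_neg hxp]
      by_cases hx : x ∈ B'
      · rw [if_pos hx, if_pos (mem_image_val_iff.mpr hx), h x hxp]; linarith
      · rw [if_neg hx, if_neg (fun c => hx (mem_image_val_iff.mp c))]; linarith
  rw [Finset.sum_sub_distrib] at key
  have hsum : ∑ x : ↥A, (if x = p then ρ else 0) = ρ := by
    rw [Finset.sum_ite_eq' Finset.univ p (fun _ => ρ)]
    simp
  linarith [key, hsum.symm ▸ key]

lemma sw_shift (h : ∀ x : ↥A, x ≠ p → w x.val = w' x) (hp : w p.val = w' p - ρ)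
    {B' : Set ↥A} (hpB : p ∈ B') :
    setWeight w (Subtype.val '' B') = setWeight w' B' - ρ := by
  rw [setWeight_subtype_sum (w := w) _ (Subtype.coe_image_subset A B'), setWeight]
  have key : ∀ x : ↥A, (if x.val ∈ Subtype.val '' B' then w x.val else 0)
      = (if x ∈ B' then w' x else 0) - (if x = p then ρ else 0) := by
    intro x
    by_cases hxp : x = p
    · subst hxp
      rw [if_pos rfl, if_pos hpB, if_pos (mem_image_val_iff.mpr hpB), hp]
    · rw [if_neg hxp]
      by_cases hx : x ∈ B'
      · rw [if_pos hx, if_pos (mem_image_val_iff.mpr hx), h x hxp]; ring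
      · rw [if_neg hx, if_neg (fun c => hx (mem_image_val_iff.mp c))]; ring
  rw [Finset.sum_congr rfl (fun x _ => key x), Finset.sum_sub_distrib,
    Finset.sum_ite_eq' Finset.univ p (fun _ => ρ)]
  simp

end SW

section MainLemmas
variable {G : SimpleGraph V} {v : V} {D : Set V}

lemma lemB (hG : G.Connected) (hD : IsComponentOf G ({v}ᶜ : Set V) D)
    {w : V → ℝ} (hwpos : ∀ u, 0 < w u)
    {w' : ↥(D ∪ {v} : Set V) → ℝ} {ρ : ℝ} (hρ : 0 ≤ ρ)
    (hwA : ∀ x : ↥(D ∪ {v} : Set V), x.val ≠ v → w x.val = w' x)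
    (hwv : w v = w' ⟨v, Or.inr rfl⟩ - ρ)
    (hwR : ∀ B : Set V, B ⊆ (D ∪ {v})ᶜ → setWeight w B ≤ ρ)
    {S₀ : Set ↥(D ∪ {v} : Set V)}
    (hS₀ : IsSafeSet (G.induce (D ∪ {v} : Set V)) w' S₀)
    (hvS₀ : (⟨v, Or.inr rfl⟩ : ↥(D ∪ {v} : Set V)) ∉ S₀) :
    IsSafeSet G w (Subtype.val '' S₀) ∧
      setWeight w (Subtype.val '' S₀) = setWeight w' S₀ := by
  classical
  have hSvA : Subtype.val '' S₀ ⊆ D ∪ {v} := Subtype.coe_image_subset _ _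
  have hvSv : v ∉ Subtype.val '' S₀ := by
    rintro ⟨x', hx', hxv⟩
    exact hvS₀ ((Subtype.ext hxv : x' = ⟨v, Or.inr rfl⟩) ▸ hx')
  have hSvD : Subtype.val '' S₀ ⊆ D := by
    intro x hx
    rcases hSvA hx with h | h
    · exact h
    · exact absurd ((h : x = v) ▸ hx) hvSv
  have hagree : ∀ x : ↥(D ∪ {v} : Set V), x ∈ S₀ → w x.val = w' x := by
    intro x hx
    refine hwA x fun hc => hvS₀ ?_
    exact (Subtype.ext hc : x = ⟨v, Or.inr rfl⟩) ▸ hx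
  have hwt : setWeight w (Subtype.val '' S₀) = setWeight w' S₀ := sw_eq_of_agree hagree
  refine ⟨⟨?_, ?_, ?_⟩, hwt⟩
  · obtain ⟨x₀, hx₀⟩ := hS₀.1
    exact ⟨x₀.val, ⟨x₀, hx₀, rfl⟩⟩
  · intro h
    exact hvSv (h ▸ Set.mem_univ v)
  · intro C X hCmp hXmp htouch
    obtain ⟨C', rfl, hC'⟩ := isComponentOf_image_val hCmp
    obtain ⟨a, haC, b, hbX, hadj⟩ := htouch
    rcases haC with ⟨a', ha'C, rfl⟩
    have haD : a'.val ∈ D := hSvD (hCmp.subset ⟨a', ha'C, rfl⟩)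
    have hbA : b ∈ D ∪ {v} := no_DR_edge hD haD hadj
    have hN : Subtype.val '' (S₀ᶜ) = (D ∪ {v}) \ (Subtype.val '' S₀) := image_val_compl S₀
    have hN2 : (D ∪ {v}) \ (Subtype.val '' S₀) = (Subtype.val '' S₀)ᶜ ∩ (D ∪ {v}) := by
      ext u; constructor
      · rintro ⟨h1, h2⟩; exact ⟨h2, h1⟩
      · rintro ⟨h1, h2⟩; exact ⟨h2, h1⟩
    have hXcomp' : IsComponentOf G (Subtype.val '' (S₀ᶜ)) (X ∩ (D ∪ {v})) := by
      rw [hN, hN2]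
      refine isComponentOf_intro (x := b) ⟨hbX, hbA⟩ ?_ ?_ ?_
      · rintro y ⟨hyX, hyA⟩
        exact ⟨hXmp.subset hyX, hyA⟩
      · rintro y ⟨hyX, hyA⟩
        exact (confine (hclA hD) (hXmp.reach hbX hyX) hbA).1 hyA
      · rintro y ⟨hyX, hyA⟩ z ⟨hz1, hz2⟩ hadjyz
        exact ⟨hXmp.closed hyX hz1 hadjyz, hz2⟩
    obtain ⟨X', hX'eq, hX'cmp⟩ := isComponentOf_image_val hXcomp'
    have hbX' : (⟨b, hbA⟩ : ↥(D ∪ {v} : Set V)) ∈ X' := by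
      have : b ∈ Subtype.val '' X' := hX'eq ▸ (⟨hbX, hbA⟩ : b ∈ X ∩ (D ∪ {v}))
      rcases this with ⟨b', hb', hbe⟩
      exact (Subtype.ext hbe.symm : (⟨b, hbA⟩ : ↥(D ∪ {v} : Set V)) = b') ▸ hb'
    have hHadj : (G.induce (D ∪ {v} : Set V)).Adj a' ⟨b, hbA⟩ := by exact hadj
    have hkey : setWeight w' X' ≤ setWeight w' C' :=
      hS₀.2.2 C' X' hC' hX'cmp ⟨a', ha'C, ⟨b, hbA⟩, hbX', hHadj⟩
    have hswC : setWeight w (Subtype.val '' C') = setWeight w' C' :=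
      sw_eq_of_agree fun x hx => hagree x (hC'.subset hx)
    rw [hswC]
    by_cases hvX : v ∈ X
    · have hvXA : (⟨v, Or.inr rfl⟩ : ↥(D ∪ {v} : Set V)) ∈ X' := by
        have : v ∈ Subtype.val '' X' := hX'eq ▸ (⟨hvX, Or.inr rfl⟩ : v ∈ X ∩ (D ∪ {v}))
        rcases this with ⟨b', hb', hbe⟩
        exact (Subtype.ext hbe.symm : (⟨v, Or.inr rfl⟩ : ↥(D ∪ {v} : Set V)) = b') ▸ hb'
      have h1 : setWeight w (X ∩ (D ∪ {v})) = setWeight w' X' - ρ := by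
        rw [hX'eq]
        exact sw_shift (p := ⟨v, Or.inr rfl⟩)
          (fun x hx => hwA x (fun hc => hx (Subtype.ext hc))) hwv hvXA
      have h2 : setWeight w (X ∩ (D ∪ {v})ᶜ) ≤ ρ := hwR _ Set.inter_subset_right
      calc setWeight w X
            = setWeight w (X ∩ (D ∪ {v})) + setWeight w (X ∩ (D ∪ {v})ᶜ) :=
            setWeight_split (D ∪ {v}) X
        _ ≤ setWeight w' X' := by rw [h1]; linarith
        _ ≤ setWeight w' C' := hkey
    · have hXAc : X ∩ (D ∪ {v})ᶜ = ∅ := by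
        by_contra hne
        obtain ⟨r, hrX, hrAc⟩ := Set.nonempty_iff_ne_empty.mpr hne
        have hsub : (D ∪ {v})ᶜ ∪ {v} ⊆ (Subtype.val '' S₀)ᶜ := by
          intro u hu
          rcases hu with hu | hu
          · exact fun hc => hu (hSvA hc)
          · exact (hu : u = v) ▸ hvSv
        exact hvX (hXmp.mem_of_reach hrX ((reach_R_to_v hG hD hrAc).mono hsub))
      have hXA : X ∩ (D ∪ {v}) = X := by
        ext u
        refine ⟨fun h => h.1, fun h => ⟨h, ?_⟩⟩
        by_contra hc
        have hmem : u ∈ X ∩ (D ∪ {v})ᶜ := ⟨h, hc⟩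
        rw [hXAc] at hmem
        exact hmem
      have h1 : setWeight w X = setWeight w' X' := by
        rw [← hXA, hX'eq]
        refine sw_eq_of_agree fun x hx => hwA x fun hc => ?_
        have : v ∈ X := by
          have : x.val ∈ X ∩ (D ∪ {v}) := hX'eq ▸ ⟨x, hx, rfl⟩
          exact hc ▸ this.1
        exact hvX this
      rw [h1]
      exact hkey

lemma lemA (hG : G.Connected) (hD : IsComponentOf G ({v}ᶜ : Set V) D)
    {w : V → ℝ} (hwpos : ∀ u, 0 < w u)
    {w' : ↥(D ∪ {v} : Set V) → ℝ} {ρ : ℝ} (hρ : 0 ≤ ρ)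
    (hwA : ∀ x : ↥(D ∪ {v} : Set V), x.val ≠ v → w x.val = w' x)
    (hwv : w v = w' ⟨v, Or.inr rfl⟩)
    (hwR : ∀ B : Set V, B ⊆ (D ∪ {v})ᶜ → setWeight w B ≤ ρ)
    {S₀ : Set ↥(D ∪ {v} : Set V)}
    (hS₀ : IsSafeSet (G.induce (D ∪ {v} : Set V)) w' S₀)
    (hvS₀ : (⟨v, Or.inr rfl⟩ : ↥(D ∪ {v} : Set V)) ∈ S₀) :
    IsSafeSet G w (Subtype.val '' S₀ ∪ (D ∪ {v})ᶜ) ∧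
      setWeight w (Subtype.val '' S₀ ∪ (D ∪ {v})ᶜ) ≤ setWeight w' S₀ + ρ := by
  classical
  have hSvA : Subtype.val '' S₀ ⊆ D ∪ {v} := Subtype.coe_image_subset _ _
  have hvSv : v ∈ Subtype.val '' S₀ := ⟨⟨v, Or.inr rfl⟩, hvS₀, rfl⟩
  have hagree : ∀ x : ↥(D ∪ {v} : Set V), w x.val = w' x := by
    intro x
    by_cases hx : x.val = v
    · have : x = ⟨v, Or.inr rfl⟩ := Subtype.ext hx
      rw [this]; exact hwv
    · exact hwA x hx
  have hSc : (Subtype.val '' S₀ ∪ (D ∪ {v})ᶜ)ᶜ = Subtype.val '' (S₀ᶜ) := by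
    rw [image_val_compl]
    ext u
    simp only [Set.compl_union, compl_compl, Set.mem_inter_iff, Set.mem_compl_iff,
      Set.mem_diff, Set.mem_union, Set.mem_singleton_iff]
    tauto
  have hwt : setWeight w (Subtype.val '' S₀ ∪ (D ∪ {v})ᶜ)
      ≤ setWeight w' S₀ + ρ := by
    have hdisj : Disjoint (Subtype.val '' S₀) ((D ∪ {v})ᶜ) := by
      rw [Set.disjoint_left]
      exact fun a ha hc => hc (hSvA ha)
    rw [setWeight_union hdisj, sw_eq_of_agree (fun x _ => hagree x)]
    have := hwR ((D ∪ {v})ᶜ) (le_refl _)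
    linarith
  refine ⟨⟨?_, ?_, ?_⟩, hwt⟩
  · obtain ⟨x₀, hx₀⟩ := hS₀.1
    exact ⟨x₀.val, Or.inl ⟨x₀, hx₀, rfl⟩⟩
  · intro h
    have hne : S₀ ≠ Set.univ := hS₀.2.1
    obtain ⟨x', hx'⟩ : ∃ x', x' ∉ S₀ := by
      by_contra hc
      push_neg at hc
      exact hne (Set.eq_univ_iff_forall.mpr hc)
    have : x'.val ∈ Subtype.val '' S₀ ∪ (D ∪ {v})ᶜ := h ▸ Set.mem_univ _
    rcases this with hmem | hmem
    · exact hx' (mem_image_val_iff.mp hmem)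
    · exact hmem x'.2
  · intro C X hCmp hXmp htouch
    rw [hSc] at hXmp
    obtain ⟨X', rfl, hX'⟩ := isComponentOf_image_val hXmp
    have hXD : Subtype.val '' X' ⊆ D := by
      intro y hy
      have hy2 : y ∈ (D ∪ {v}) \ (Subtype.val '' S₀) := image_val_compl S₀ ▸ hXmp.subset hy
      rcases hy2.1 with h | h
      · exact h
      · exact absurd ((h : y = v) ▸ hvSv) ((h : y = v) ▸ hy2.2)
    obtain ⟨a, haC, b, hbX, hadj⟩ := htouch
    have hbD : b ∈ D := hXD hbX
    have haA : a ∈ D ∪ {v} := no_DR_edge hD hbD hadj.symm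
    have haSv : a ∈ Subtype.val '' S₀ := by
      rcases hCmp.subset haC with h | h
      · exact h
      · exact absurd haA h
    have hSvEq : (Subtype.val '' S₀ ∪ (D ∪ {v})ᶜ) ∩ (D ∪ {v}) = Subtype.val '' S₀ := by
      ext u
      constructor
      · rintro ⟨h1 | h1, h2⟩
        · exact h1
        · exact absurd h2 h1
      · intro h
        exact ⟨Or.inl h, hSvA h⟩
    have hCaComp : IsComponentOf G (Subtype.val '' S₀) (C ∩ (D ∪ {v})) := by
      rw [← hSvEq]
      refine isComponentOf_intro (x := a) ⟨haC, haA⟩ ?_ ?_ ?_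
      · rintro y ⟨hyC, hyA⟩
        exact ⟨hCmp.subset hyC, hyA⟩
      · rintro y ⟨hyC, hyA⟩
        exact (confine (hclA hD) (hCmp.reach haC hyC) haA).1 hyA
      · rintro y ⟨hyC, hyA⟩ z ⟨hz1, hz2⟩ hadjyz
        exact ⟨hCmp.closed hyC hz1 hadjyz, hz2⟩
    obtain ⟨C', hC'eq, hC'⟩ := isComponentOf_image_val hCaComp
    have haC' : (⟨a, haA⟩ : ↥(D ∪ {v} : Set V)) ∈ C' := by
      have : a ∈ Subtype.val '' C' := hC'eq ▸ (⟨haC, haA⟩ : a ∈ C ∩ (D ∪ {v}))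
      rcases this with ⟨a', ha', hae⟩
      exact (Subtype.ext hae.symm : (⟨a, haA⟩ : ↥(D ∪ {v} : Set V)) = a') ▸ ha'
    have hbA : b ∈ D ∪ {v} := Or.inl hbD
    have hbX' : (⟨b, hbA⟩ : ↥(D ∪ {v} : Set V)) ∈ X' := by
      rcases hbX with ⟨b', hb', hbe⟩
      exact (Subtype.ext hbe.symm : (⟨b, hbA⟩ : ↥(D ∪ {v} : Set V)) = b') ▸ hb'
    have hHadj : (G.induce (D ∪ {v} : Set V)).Adj ⟨a, haA⟩ ⟨b, hbA⟩ := by exact hadj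
    have hkey : setWeight w' X' ≤ setWeight w' C' :=
      hS₀.2.2 C' X' hC' hX' ⟨⟨a, haA⟩, haC', ⟨b, hbA⟩, hbX', hHadj⟩
    have h1 : setWeight w (Subtype.val '' X') = setWeight w' X' :=
      sw_eq_of_agree fun x _ => hagree x
    have h2 : setWeight w (C ∩ (D ∪ {v})) = setWeight w' C' := by
      rw [hC'eq]; exact sw_eq_of_agree fun x _ => hagree x
    have h3 : setWeight w C
        = setWeight w (C ∩ (D ∪ {v})) + setWeight w (C ∩ (D ∪ {v})ᶜ) :=
      setWeight_split (D ∪ {v}) C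
    have h4 : 0 ≤ setWeight w (C ∩ (D ∪ {v})ᶜ) :=
      setWeight_nonneg (fun u => (hwpos u).le) _
    rw [h1]
    linarith

lemma lemC (hG : G.Connected) (hD : IsComponentOf G ({v}ᶜ : Set V) D)
    {w : V → ℝ} (hwpos : ∀ u, 0 < w u)
    {w' : ↥(D ∪ {v} : Set V) → ℝ} (hw'pos : ∀ x, 0 < w' x) {ρ : ℝ} (hρ : 0 < ρ)
    (hwA : ∀ x : ↥(D ∪ {v} : Set V), x.val ≠ v → w x.val = w' x)
    (hwlb : w' ⟨v, Or.inr rfl⟩ - ρ ≤ w v) (hwub : w v ≤ w' ⟨v, Or.inr rfl⟩)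
    (hwR : ∀ B : Set V, B ⊆ (D ∪ {v})ᶜ → setWeight w B ≤ ρ)
    (hgap3 : ∀ B₁ B₂ : Set ↥(D ∪ {v} : Set V),
      setWeight w' B₁ ≤ setWeight w' B₂ + 3 * ρ → setWeight w' B₁ ≤ setWeight w' B₂)
    (hsmall : ∀ x : ↥(D ∪ {v} : Set V), 3 * ρ < w' x)
    {S₀ : Set ↥(D ∪ {v} : Set V)} (hS₀ne : S₀ ≠ Set.univ)
    {T : Set V} (hT : IsConnSafeSet G w T)
    (hTle : setWeight w T ≤ setWeight w' S₀ + ρ) :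
    IsConnSafeSet (G.induce (D ∪ {v} : Set V)) w' (Subtype.val ⁻¹' T) ∧
      setWeight w' (Subtype.val ⁻¹' T) ≤ setWeight w' S₀ := by
  classical
  have hwnn : ∀ u, 0 ≤ w u := fun u => (hwpos u).le
  have hwA' : ∀ x : ↥(D ∪ {v} : Set V), x ≠ ⟨v, Or.inr rfl⟩ → w x.val = w' x :=
    fun x hx => hwA x (fun hc => hx (Subtype.ext hc))
  have hwAub : ∀ x : ↥(D ∪ {v} : Set V), w x.val ≤ w' x := by
    intro x
    by_cases hx : x = ⟨v, Or.inr rfl⟩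
    · rw [hx]; exact hwub
    · rw [hwA' x hx]
  have valT'eq : Subtype.val '' (Subtype.val ⁻¹' T) = (D ∪ {v}) ∩ T :=
    Subtype.image_preimage_coe _ _
  have hAuniv : Subtype.val '' (Set.univ : Set ↥(D ∪ {v} : Set V)) = D ∪ {v} :=
    Subtype.coe_image_univ _
  have hswA : setWeight w' (Set.univ : Set ↥(D ∪ {v} : Set V)) - ρ
      ≤ setWeight w (D ∪ {v}) := by
    have h := sw_lb hρ.le hwA' hwlb (Set.univ : Set ↥(D ∪ {v} : Set V))
    rwa [hAuniv] at h
  obtain ⟨x₀, hx₀⟩ : ∃ x', x' ∉ S₀ := by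
    by_contra hc
    push_neg at hc
    exact hS₀ne (Set.eq_univ_iff_forall.mpr hc)
  have hS₀univ : setWeight w' S₀ + w' x₀
      ≤ setWeight w' (Set.univ : Set ↥(D ∪ {v} : Set V)) := by
    have hu : setWeight w' (S₀ ∪ {x₀}) = setWeight w' S₀ + setWeight w' {x₀} :=
      setWeight_union (by rw [Set.disjoint_left]; rintro a ha (rfl : a = x₀); exact hx₀ ha)
    have hm : setWeight w' (S₀ ∪ {x₀}) ≤ setWeight w' Set.univ :=
      setWeight_mono (fun x => (hw'pos x).le) (Set.subset_univ _)
    rw [setWeight_singleton] at hu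
    linarith
  -- T ∩ (D ∪ {v}) is nonempty
  have hTA : ((D ∪ {v}) ∩ T).Nonempty := by
    by_contra hc
    rw [Set.not_nonempty_iff_eq_empty] at hc
    have hATc : (D ∪ {v} : Set V) ⊆ Tᶜ := by
      intro a ha hc2
      have hmem : a ∈ (D ∪ {v}) ∩ T := ⟨ha, hc2⟩
      rw [hc] at hmem
      exact hmem
    have hvTc : v ∈ Tᶜ := hATc (Or.inr rfl)
    have hXhat := isComponentOf_of_mem (G := G) hvTc
    have hAXhat : (D ∪ {v} : Set V) ⊆ {y | ReachIn G Tᶜ v y} := by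
      intro a ha
      exact (((reach_to_v hG hD ha).mono hATc).symm : ReachIn G Tᶜ v a)
    obtain ⟨u, huT⟩ := hT.1.1
    have hXcl : ∀ q ∈ {y | ReachIn G Tᶜ v y}, ∀ y, G.Adj q y → y ∉ T
        → y ∈ {y | ReachIn G Tᶜ v y} :=
      fun q hq y hadj hyT => hXhat.closed hq hyT hadj
    have hXT' : ∀ x ∈ {y | ReachIn G Tᶜ v y}, x ∉ T := fun x hx => hXhat.subset hx
    obtain ⟨p, q, hpT, hqX, hpq⟩ :=
      crossing hXcl hXT' (reachIn_univ_of_reachable (hG.preconnected u v)) huT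
        (ReachIn.refl hvTc)
    have hChat := isComponentOf_of_mem (G := G) hpT
    have hsafe := hT.1.2.2 _ _ hChat hXhat ⟨p, ReachIn.refl hpT, q, hqX, hpq⟩
    have h1 : setWeight w (D ∪ {v}) ≤ setWeight w {y | ReachIn G Tᶜ v y} :=
      setWeight_mono hwnn hAXhat
    have h2 : setWeight w {y | ReachIn G T p y} ≤ setWeight w T :=
      setWeight_mono hwnn (fun y hy => ReachIn.mem_right hy)
    have h3 := hsmall x₀
    linarith
  refine ⟨⟨⟨?_, ?_, ?_⟩, ?_⟩, ?_⟩
  · obtain ⟨a, haA, haT⟩ := hTA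
    exact ⟨⟨a, haA⟩, haT⟩
  · -- not univ
    intro hc
    have hAT : (D ∪ {v}) ∩ T = (D ∪ {v} : Set V) := by
      rw [← valT'eq, hc, hAuniv]
    have hsplit : setWeight w T = setWeight w (T ∩ (D ∪ {v})) + setWeight w (T ∩ (D ∪ {v})ᶜ) :=
      setWeight_split _ _
    have hTAc : setWeight w (T ∩ (D ∪ {v})) = setWeight w (D ∪ {v}) := by
      rw [Set.inter_comm, hAT]
    have hnn : 0 ≤ setWeight w (T ∩ (D ∪ {v})ᶜ) := setWeight_nonneg hwnn _
    have h3 := hsmall x₀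
    linarith
  · -- safety condition
    intro C' X'' hC' hX'' htouch
    have hC'G := isComponentOf_induce_iff.mp hC'
    have hX''G := isComponentOf_induce_iff.mp hX''
    rw [valT'eq] at hC'G
    have himgc : Subtype.val '' ((Subtype.val ⁻¹' T : Set ↥(D ∪ {v} : Set V))ᶜ)
        = (D ∪ {v}) ∩ Tᶜ := by
      rw [image_val_compl, valT'eq]
      ext u
      simp only [Set.mem_diff, Set.mem_inter_iff, Set.mem_compl_iff]
      tauto
    rw [himgc] at hX''G
    obtain ⟨c₀', hc₀'⟩ := hC'.nonempty_s5
    have hc₀C : c₀'.val ∈ Subtype.val '' C' := ⟨c₀', hc₀', rfl⟩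
    have hc₀AT : c₀'.val ∈ (D ∪ {v}) ∩ T := hC'G.subset hc₀C
    have hChatcomp := isComponentOf_of_mem (G := G) hc₀AT.2
    have hCChat : Subtype.val '' C' ⊆ {y | ReachIn G T c₀'.val y} := by
      intro y hy
      exact (hC'G.reach hc₀C hy).mono Set.inter_subset_right
    have hChatA : {y | ReachIn G T c₀'.val y} ∩ (D ∪ {v}) ⊆ Subtype.val '' C' := by
      rintro y ⟨hyChat, hyA⟩
      have hr := (confine (hclA hD) hyChat hc₀AT.1).1 hyA
      rw [Set.inter_comm] at hr
      exact hC'G.mem_of_reach hc₀C hr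
    obtain ⟨x₀', hx₀'⟩ := hX''.nonempty_s5
    have hx₀X : x₀'.val ∈ Subtype.val '' X'' := ⟨x₀', hx₀', rfl⟩
    have hx₀AT : x₀'.val ∈ (D ∪ {v}) ∩ Tᶜ := hX''G.subset hx₀X
    have hXhatcomp := isComponentOf_of_mem (G := G) hx₀AT.2
    have hXXhat : Subtype.val '' X'' ⊆ {y | ReachIn G Tᶜ x₀'.val y} := by
      intro y hy
      exact (hX''G.reach hx₀X hy).mono Set.inter_subset_right
    obtain ⟨a', haC', b', hbX'', hHadj⟩ := htouch
    have htouchG : Touches G {y | ReachIn G T c₀'.val y} {y | ReachIn G Tᶜ x₀'.val y} :=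
      ⟨a'.val, hCChat ⟨a', haC', rfl⟩, b'.val, hXXhat ⟨b', hbX'', rfl⟩, by exact hHadj⟩
    have hsafe := hT.1.2.2 _ _ hChatcomp hXhatcomp htouchG
    have e1 : setWeight w' X'' - ρ ≤ setWeight w (Subtype.val '' X'') :=
      sw_lb hρ.le hwA' hwlb _
    have e2 : setWeight w (Subtype.val '' X'') ≤ setWeight w {y | ReachIn G Tᶜ x₀'.val y} :=
      setWeight_mono hwnn hXXhat
    have e3 : setWeight w {y | ReachIn G T c₀'.val y}
        = setWeight w ({y | ReachIn G T c₀'.val y} ∩ (D ∪ {v}))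
          + setWeight w ({y | ReachIn G T c₀'.val y} ∩ (D ∪ {v})ᶜ) :=
      setWeight_split _ _
    have e4 : setWeight w ({y | ReachIn G T c₀'.val y} ∩ (D ∪ {v}))
        ≤ setWeight w (Subtype.val '' C') := setWeight_mono hwnn hChatA
    have e5 : setWeight w ({y | ReachIn G T c₀'.val y} ∩ (D ∪ {v})ᶜ) ≤ ρ :=
      hwR _ Set.inter_subset_right
    have e6 : setWeight w (Subtype.val '' C') ≤ setWeight w' C' :=
      sw_ub hwAub (fun x => (hw'pos x).le) _
    refine hgap3 _ _ (by linarith)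
  · -- connectivity
    have hne : Nonempty ↥(Subtype.val ⁻¹' T : Set ↥(D ∪ {v} : Set V)) := by
      obtain ⟨a, haA, haT⟩ := hTA
      exact ⟨⟨⟨a, haA⟩, haT⟩⟩
    rw [SimpleGraph.connected_iff]
    refine ⟨fun p q => ?_, hne⟩
    have hp : (p.val : V) ∈ T := p.2
    have hq : (q.val : V) ∈ T := q.2
    have h1 : ReachIn G T p.val.val q.val.val := by
      have := hT.2.preconnected ⟨p.val.val, hp⟩ ⟨q.val.val, hq⟩
      exact reachIn_of_reachable this
    have h2 := (confine (hclA hD) h1 p.val.2).1 q.val.2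
    have h3 : ReachIn G (Subtype.val '' (Subtype.val ⁻¹' T : Set ↥(D ∪ {v} : Set V)))
        p.val.val q.val.val := by
      rw [valT'eq, Set.inter_comm]
      exact h2
    have h4 : ReachIn (G.induce (D ∪ {v} : Set V)) (Subtype.val ⁻¹' T) p.val q.val :=
      reachIn_induce_iff.mpr h3
    have h5 := reachable_of_reachIn h4 p.2 q.2
    exact h5
  · -- weight bound
    have e1 : setWeight w' (Subtype.val ⁻¹' T) - ρ
        ≤ setWeight w (Subtype.val '' (Subtype.val ⁻¹' T : Set ↥(D ∪ {v} : Set V))) :=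
      sw_lb hρ.le hwA' hwlb _
    rw [valT'eq] at e1
    have hsplit : setWeight w T = setWeight w (T ∩ (D ∪ {v})) + setWeight w (T ∩ (D ∪ {v})ᶜ) :=
      setWeight_split _ _
    have hcomm : setWeight w (T ∩ (D ∪ {v})) = setWeight w ((D ∪ {v}) ∩ T) := by
      rw [Set.inter_comm]
    have hnn : 0 ≤ setWeight w (T ∩ (D ∪ {v})ᶜ) := setWeight_nonneg hwnn _
    refine hgap3 _ _ (by linarith)

lemma key (hG : G.Connected) (hGcs : InGcs G) (hD : IsComponentOf G ({v}ᶜ : Set V) D)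
    (w' : ↥(D ∪ {v} : Set V) → ℝ) (hw'pos : ∀ x, 0 < w' x) :
    safeNumber (G.induce (D ∪ {v} : Set V)) w'
      = connSafeNumber (G.induce (D ∪ {v} : Set V)) w' := by
  classical
  by_cases hfam : {S' : Set ↥(D ∪ {v} : Set V) |
      IsSafeSet (G.induce (D ∪ {v} : Set V)) w' S'}.Nonempty
  case neg =>
    have h1 : {S' : Set ↥(D ∪ {v} : Set V) |
        IsSafeSet (G.induce (D ∪ {v} : Set V)) w' S'} = ∅ :=
      Set.not_nonempty_iff_eq_empty.mp hfam
    have h2 : {S' : Set ↥(D ∪ {v} : Set V) |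
        IsConnSafeSet (G.induce (D ∪ {v} : Set V)) w' S'} = ∅ := by
      rw [Set.eq_empty_iff_forall_notMem]
      intro S hS
      rw [Set.eq_empty_iff_forall_notMem] at h1
      exact h1 S hS.1
    rw [safeNumber, connSafeNumber, h1, h2]
  case pos =>
    obtain ⟨S₀, hS₀, hS₀w⟩ : ∃ S₀, IsSafeSet (G.induce (D ∪ {v} : Set V)) w' S₀ ∧
        setWeight w' S₀ = safeNumber (G.induce (D ∪ {v} : Set V)) w' := by
      have hmem := (hfam.image (setWeight w')).csInf_mem ((Set.toFinite _).image _)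
      obtain ⟨S₀, hS₀, hS₀w⟩ := hmem
      exact ⟨S₀, hS₀, hS₀w⟩
    obtain ⟨ε, hε, hgap⟩ := exists_gap
      (setWeight w' '' (Set.univ : Set (Set ↥(D ∪ {v} : Set V)))) ((Set.toFinite _).image _)
    obtain ⟨xm, -, hxm⟩ := Finset.exists_min_image Finset.univ w'
      ⟨⟨v, Or.inr rfl⟩, Finset.mem_univ _⟩
    have hmpos : 0 < w' xm := hw'pos xm
    set ρ : ℝ := min ε (w' xm) / 4 with hρdef
    have hminpos : 0 < min ε (w' xm) := lt_min hε hmpos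
    have hρpos : 0 < ρ := by positivity
    have h3ρε : 3 * ρ ≤ ε := by
      have h1 : min ε (w' xm) ≤ ε := min_le_left _ _
      rw [hρdef]; linarith
    have h3ρm : 3 * ρ < w' xm := by
      have h1 : min ε (w' xm) ≤ w' xm := min_le_right _ _
      rw [hρdef]; linarith
    have hsmall : ∀ x : ↥(D ∪ {v} : Set V), 3 * ρ < w' x :=
      fun x => lt_of_lt_of_le h3ρm (hxm x (Finset.mem_univ x))
    have hgap3 : ∀ B₁ B₂ : Set ↥(D ∪ {v} : Set V),
        setWeight w' B₁ ≤ setWeight w' B₂ + 3 * ρ → setWeight w' B₁ ≤ setWeight w' B₂ := by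
      intro B₁ B₂ h
      exact hgap _ ⟨B₁, trivial, rfl⟩ _ ⟨B₂, trivial, rfl⟩ (by linarith)
    set δ : ℝ := ρ / (Fintype.card V + 1) with hδdef
    have hδpos : 0 < δ := by positivity
    set w : V → ℝ := fun u => if h : u ∈ D ∪ {v} then
        (if u = v ∧ (⟨v, Or.inr rfl⟩ : ↥(D ∪ {v} : Set V)) ∉ S₀ then w' ⟨u, h⟩ - ρ
          else w' ⟨u, h⟩) else δ with hwdef
    have hvmem : v ∈ D ∪ {v} := Or.inr rfl
    have hwvρ : w' (⟨v, Or.inr rfl⟩ : ↥(D ∪ {v} : Set V)) - ρ > 0 := by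
      have := hsmall ⟨v, Or.inr rfl⟩
      linarith
    have hwpos : ∀ u, 0 < w u := by
      intro u
      simp only [hwdef]
      split_ifs with h1 h2
      · obtain ⟨rfl, -⟩ := h2
        exact hwvρ
      · exact hw'pos _
      · exact hδpos
    have hwnn : ∀ u, 0 ≤ w u := fun u => (hwpos u).le
    have hwA : ∀ x : ↥(D ∪ {v} : Set V), x.val ≠ v → w x.val = w' x := by
      intro x hx
      simp only [hwdef]
      rw [dif_pos x.2, if_neg (fun hc => hx hc.1)]
    have hwR : ∀ B : Set V, B ⊆ (D ∪ {v})ᶜ → setWeight w B ≤ ρ := by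
      intro B hB
      have hterm : ∀ u : V, (if u ∈ B then w u else 0) ≤ δ := by
        intro u
        by_cases h : u ∈ B
        · rw [if_pos h]
          simp only [hwdef]
          rw [dif_neg (hB h)]
        · rw [if_neg h]
          exact hδpos.le
      have hsum : (∑ u : V, if u ∈ B then w u else 0) ≤ ∑ _u : V, δ :=
        Finset.sum_le_sum fun u _ => hterm u
      have hconst : (∑ _u : V, δ) = (Fintype.card V : ℝ) * δ := by
        rw [Finset.sum_const, Finset.card_univ, nsmul_eq_mul]
      have hfin : (Fintype.card V : ℝ) * δ ≤ ρ := by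
        rw [hδdef, ← mul_div_assoc,
          div_le_iff₀ (by positivity : (0:ℝ) < (Fintype.card V : ℝ) + 1)]
        nlinarith [hρpos, Nat.cast_nonneg (α := ℝ) (Fintype.card V)]
      rw [setWeight]
      calc (∑ u : V, if u ∈ B then w u else 0) ≤ ∑ _u : V, δ := hsum
        _ = (Fintype.card V : ℝ) * δ := hconst
        _ ≤ ρ := hfin
    have hwvS : (⟨v, Or.inr rfl⟩ : ↥(D ∪ {v} : Set V)) ∈ S₀ →
        w v = w' (⟨v, Or.inr rfl⟩ : ↥(D ∪ {v} : Set V)) := by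
      intro hvS
      simp only [hwdef]
      simp [hvmem, hvS]
    have hwvnS : (⟨v, Or.inr rfl⟩ : ↥(D ∪ {v} : Set V)) ∉ S₀ →
        w v = w' (⟨v, Or.inr rfl⟩ : ↥(D ∪ {v} : Set V)) - ρ := by
      intro hvS
      simp only [hwdef]
      simp [hvmem, hvS]
    have hwvcases : w v = w' (⟨v, Or.inr rfl⟩ : ↥(D ∪ {v} : Set V)) ∨
        w v = w' (⟨v, Or.inr rfl⟩ : ↥(D ∪ {v} : Set V)) - ρ := by
      by_cases hvS : (⟨v, Or.inr rfl⟩ : ↥(D ∪ {v} : Set V)) ∈ S₀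
      · exact Or.inl (hwvS hvS)
      · exact Or.inr (hwvnS hvS)
    have hwlb : w' (⟨v, Or.inr rfl⟩ : ↥(D ∪ {v} : Set V)) - ρ ≤ w v := by
      rcases hwvcases with h | h <;> rw [h] <;> linarith
    have hwub : w v ≤ w' (⟨v, Or.inr rfl⟩ : ↥(D ∪ {v} : Set V)) := by
      rcases hwvcases with h | h <;> rw [h] <;> linarith
    obtain ⟨Shat, hShat, hShatw⟩ : ∃ Shat, IsSafeSet G w Shat ∧
        setWeight w Shat ≤ setWeight w' S₀ + ρ := by
      by_cases hvS : (⟨v, Or.inr rfl⟩ : ↥(D ∪ {v} : Set V)) ∈ S₀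
      · obtain ⟨h1, h2⟩ := lemA hG hD hwpos hρpos.le hwA (hwvS hvS) hwR hS₀ hvS
        exact ⟨_, h1, h2⟩
      · obtain ⟨h1, h2⟩ := lemB hG hD hwpos hρpos.le hwA (hwvnS hvS) hwR hS₀ hvS
        refine ⟨_, h1, ?_⟩
        rw [h2]
        linarith
    have hbddS : BddBelow (setWeight w '' {S | IsSafeSet G w S}) := by
      refine ⟨0, ?_⟩
      rintro y ⟨S, -, rfl⟩
      exact setWeight_nonneg hwnn S
    have hsafele : safeNumber G w ≤ setWeight w' S₀ + ρ := by
      refine le_trans (csInf_le hbddS ⟨Shat, hShat, rfl⟩) hShatw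
    have heq := hGcs w hwpos
    -- connected safe sets of G exist
    have hconnne : {S | IsConnSafeSet G w S}.Nonempty := by
      by_contra hc
      rw [Set.not_nonempty_iff_eq_empty] at hc
      have h0 : connSafeNumber G w = 0 := by
        rw [connSafeNumber, hc, Set.image_empty, Real.sInf_empty]
      have himg2 : (setWeight w '' {S | IsSafeSet G w S}).Nonempty :=
        ⟨setWeight w Shat, ⟨Shat, hShat, rfl⟩⟩
      have hmem := himg2.csInf_mem ((Set.toFinite _).image _)
      obtain ⟨S₁, hS₁, hS₁w⟩ := hmem
      have hpos : 0 < setWeight w S₁ := setWeight_pos hwpos hS₁.1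
      rw [safeNumber] at heq
      rw [hS₁w, heq, h0] at hpos
      exact lt_irrefl _ hpos
    obtain ⟨T, hTconn, hTw⟩ : ∃ T, IsConnSafeSet G w T ∧
        setWeight w T = connSafeNumber G w := by
      have hmem := (hconnne.image (setWeight w)).csInf_mem ((Set.toFinite _).image _)
      obtain ⟨T, hT, hTq⟩ := hmem
      exact ⟨T, hT, hTq⟩
    have hTle : setWeight w T ≤ setWeight w' S₀ + ρ := by
      rw [hTw, ← heq]
      exact hsafele
    obtain ⟨hT'conn, hT'w⟩ := lemC hG hD hwpos hw'pos hρpos hwA hwlb hwub hwR hgap3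
      hsmall hS₀.2.1 hTconn hTle
    have hbddH : BddBelow (setWeight w' ''
        {S | IsSafeSet (G.induce (D ∪ {v} : Set V)) w' S}) := by
      refine ⟨0, ?_⟩
      rintro y ⟨S, -, rfl⟩
      exact setWeight_nonneg (fun x => (hw'pos x).le) S
    have hle1 : connSafeNumber (G.induce (D ∪ {v} : Set V)) w'
        ≤ safeNumber (G.induce (D ∪ {v} : Set V)) w' := by
      have h1 : connSafeNumber (G.induce (D ∪ {v} : Set V)) w'
          ≤ setWeight w' (Subtype.val ⁻¹' T) := by
        refine csInf_le ?_ ⟨_, hT'conn, rfl⟩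
        refine ⟨0, ?_⟩
        rintro y ⟨S, -, rfl⟩
        exact setWeight_nonneg (fun x => (hw'pos x).le) S
      calc connSafeNumber (G.induce (D ∪ {v} : Set V)) w'
          ≤ setWeight w' (Subtype.val ⁻¹' T) := h1
        _ ≤ setWeight w' S₀ := hT'w
        _ = safeNumber (G.induce (D ∪ {v} : Set V)) w' := hS₀w
    have hle2 : safeNumber (G.induce (D ∪ {v} : Set V)) w'
        ≤ connSafeNumber (G.induce (D ∪ {v} : Set V)) w' := by
      refine csInf_le_csInf hbddH ⟨_, ⟨_, hT'conn, rfl⟩⟩ ?_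
      exact Set.image_mono (fun S hS => hS.1)
    linarith

end MainLemmas

end SafeAux

theorem stmt_5 (G : SimpleGraph V) (hG : G.Connected) (hGcs : InGcs G) (v : V)
    (hcut : ¬ (G.induce ({v}ᶜ : Set V)).Connected) (D : Set V)
    (hD : IsComponentOf G ({v}ᶜ : Set V) D) :
    InGcs (G.induce (D ∪ {v})) := by
  intro w' hw'pos
  exact SafeAux.key hG hGcs hD w' hw'pos
end
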